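/- arXiv:1705.05827 — 7 statements merged into one kernel-verified Lean document; each statement's English description precedes it below -/
import Mathlib

section
/- The two-sided group digraph 2S(G;L,R) is strongly connected if and only if G = W(L⁻¹)W(R) = W(L)W(R⁻¹) and there exist i, j ∈ ℕ such that the identity e can be written as a word in L⁻¹ of length i+1 times a word in R of length i, and also as a word in L⁻¹ of length j times a word in R of length j+1. -/
open Relation Pointwise

/-- `w` is a product of a list of `n` elements of `S`. -/
def IsWord {G : Type*} [Group G] (S : Set G) (n : ℕ) (w : G) : Prop :=
  ∃ l : List G, l.length = n ∧ (∀ x ∈ l, x ∈ S) ∧ l.prod = w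

/-- The set of all positive-length words in `S`. -/
def WordSet {G : Type*} [Group G] (S : Set G) : Set G :=
  {w | ∃ n : ℕ, 0 < n ∧ IsWord S n w}

/-- Arc of the two-sided group digraph `2S(G;L,R)`. -/
def Arc {G : Type*} [Group G] (L R : Set G) (g h : G) : Prop :=
  ∃ l ∈ L, ∃ r ∈ R, h = l⁻¹ * g * r

/-- Existence of a directed path (possibly of length 0). -/
def DPath {G : Type*} [Group G] (L R : Set G) : G → G → Prop :=
  ReflTransGen (Arc L R)

/-- Weak connectivity: path ignoring directions. -/
def WeakConn {G : Type*} [Group G] (L R : Set G) : G → G → Prop :=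
  ReflTransGen (fun g h => Arc L R g h ∨ Arc L R h g)

/-- Strong connectivity of two vertices. -/
def StrongConn {G : Type*} [Group G] (L R : Set G) (g h : G) : Prop :=
  DPath L R g h ∧ DPath L R h g

section Aux

variable {G : Type*} [Group G] {L R S : Set G}

lemma isWord_one : IsWord S 0 (1 : G) := ⟨[], rfl, by simp, rfl⟩

lemma isWord_singleton {x : G} (hx : x ∈ S) : IsWord S 1 x :=
  ⟨[x], rfl, by simpa, by simp⟩

lemma isWord_mul {m n : ℕ} {u v : G} (hu : IsWord S m u) (hv : IsWord S n v) :
    IsWord S (m + n) (u * v) := by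
  obtain ⟨lu, hlu, hmu, hpu⟩ := hu
  obtain ⟨lv, hlv, hmv, hpv⟩ := hv
  exact ⟨lu ++ lv, by simp [hlu, hlv], by
    intro x hx; rcases List.mem_append.1 hx with h | h
    exacts [hmu x h, hmv x h], by simp [List.prod_append, hpu, hpv]⟩

lemma isWord_congr {m n : ℕ} {u : G} (h : m = n) (hu : IsWord S m u) : IsWord S n u :=
  h ▸ hu

lemma isWord_pow {n : ℕ} {u : G} (k : ℕ) (hu : IsWord S n u) : IsWord S (k * n) (u ^ k) := by
  induction k with
  | zero => simpa using (isWord_one : IsWord S 0 (1 : G))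
  | succ k ih =>
      have := isWord_mul ih hu
      exact isWord_congr (by ring : k * n + n = (k+1)*n) (by simpa [pow_succ] using this)

lemma isWord_inv {n : ℕ} {u : G} (hu : IsWord S n u) : IsWord S⁻¹ n u⁻¹ := by
  obtain ⟨l, hl, hm, hp⟩ := hu
  refine ⟨(l.map fun x => x⁻¹).reverse, by simp [hl], ?_, ?_⟩
  · intro x hx
    simp only [List.mem_reverse, List.mem_map] at hx
    obtain ⟨a, ha, rfl⟩ := hx
    simpa using hm a ha
  · rw [← List.prod_inv_reverse, hp]

lemma isWord_inv' {n : ℕ} {u : G} (hu : IsWord S⁻¹ n u) : IsWord S n u⁻¹ := by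
  simpa using isWord_inv hu

lemma dpath_words : ∀ (lu lv : List G), lu.length = lv.length →
    (∀ x ∈ lu, x ∈ L⁻¹) → (∀ x ∈ lv, x ∈ R) → ∀ g : G,
    DPath L R g (lu.prod * g * lv.reverse.prod)
  | [], [], _, _, _, g => by have h0 : DPath L R g g := ReflTransGen.refl; simpa using h0
  | [], b :: lv, h, _, _, g => by simp at h
  | a :: lu, [], h, _, _, g => by simp at h
  | a :: lu, r :: lv, h, hmu, hmv, g => by
      have ih := dpath_words lu lv (by simpa using h)
        (fun x hx => hmu x (List.mem_cons_of_mem _ hx))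
        (fun x hx => hmv x (List.mem_cons_of_mem _ hx)) g
      have ha : a ∈ L⁻¹ := hmu a List.mem_cons_self
      have hr : r ∈ R := hmv r List.mem_cons_self
      have := ReflTransGen.tail ih ⟨a⁻¹, Set.mem_inv.1 ha, r, hr, rfl⟩
      have heq : (a⁻¹)⁻¹ * (lu.prod * g * lv.reverse.prod) * r
          = (a :: lu).prod * g * ((r :: lv).reverse).prod := by
        simp [List.prod_append, mul_assoc]
      rwa [heq] at this
      -- target: (a::lu).prod * g * ((r::lv).reverse).prod = (a⁻¹)⁻¹ * (lu.prod * g * lv.reverse.prod) * r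

lemma dpath_iff {g h : G} : DPath L R g h ↔
    ∃ n : ℕ, ∃ u v : G, IsWord L⁻¹ n u ∧ IsWord R n v ∧ h = u * g * v := by
  constructor
  · intro hp
    induction hp with
    | refl => exact ⟨0, 1, 1, isWord_one, isWord_one, by group⟩
    | tail _ harc ih =>
        obtain ⟨n, u, v, hu, hv, rfl⟩ := ih
        obtain ⟨l, hl, r, hr, rfl⟩ := harc
        refine ⟨n + 1, l⁻¹ * u, v * r,
          isWord_congr (by ring) (isWord_mul (isWord_singleton (Set.inv_mem_inv.2 hl)) hu),
          isWord_mul hv (isWord_singleton hr), by group⟩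
  · rintro ⟨n, u, v, ⟨lu, hlu, hmu, rfl⟩, ⟨lv, hlv, hmv, rfl⟩, rfl⟩
    have := dpath_words lu lv.reverse (by simp [hlu, hlv]) hmu
      (fun x hx => hmv x (List.mem_reverse.1 hx)) g
    simpa using this

theorem stmt_0' (hL : L.Nonempty) (hR : R.Nonempty) :
    (∀ g h : G, DPath L R g h) ↔
      (WordSet L⁻¹ * WordSet R = Set.univ ∧ WordSet L * WordSet R⁻¹ = Set.univ ∧
        ∃ i j : ℕ,
          (∃ u v : G, IsWord L⁻¹ (i + 1) u ∧ IsWord R i v ∧ u * v = 1) ∧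
          (∃ u v : G, IsWord L⁻¹ j u ∧ IsWord R (j + 1) v ∧ u * v = 1)) := by
  obtain ⟨l₀, hl₀⟩ := hL
  obtain ⟨r₀, hr₀⟩ := hR
  constructor
  · intro hconn
    refine ⟨?_, ?_, ?_⟩
    · ext g
      simp only [Set.mem_univ, iff_true]
      obtain ⟨n, u, v, hu, hv, hg⟩ := dpath_iff.1 (hconn (l₀⁻¹ * r₀) g)
      refine Set.mem_mul.2 ⟨u * l₀⁻¹, ⟨n + 1, Nat.succ_pos n,
          isWord_mul hu (isWord_singleton (Set.inv_mem_inv.2 hl₀))⟩,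
        r₀ * v, ⟨n + 1, Nat.succ_pos n,
          isWord_congr (by ring) (isWord_mul (isWord_singleton hr₀) hv)⟩, ?_⟩
      rw [hg]; group
    · ext g
      simp only [Set.mem_univ, iff_true]
      obtain ⟨n, u, v, hu, hv, hg⟩ := dpath_iff.1 (hconn (l₀⁻¹ * g * r₀) 1)
      refine Set.mem_mul.2 ⟨l₀ * u⁻¹, ⟨n + 1, Nat.succ_pos n,
          isWord_congr (by ring) (isWord_mul (isWord_singleton hl₀) (isWord_inv' hu))⟩,
        v⁻¹ * r₀⁻¹, ⟨n + 1, Nat.succ_pos n,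
          isWord_mul (isWord_inv hv) (isWord_singleton (Set.inv_mem_inv.2 hr₀))⟩, ?_⟩
      have : u * (l₀⁻¹ * g * r₀) * v = 1 := hg.symm
      have : g = l₀ * u⁻¹ * (v⁻¹ * r₀⁻¹) := by
        rw [eq_comm]
        rw [← mul_left_cancel_iff (a := l₀⁻¹), ← mul_right_cancel_iff (a := r₀)]
        rw [← mul_left_cancel_iff (a := u), ← mul_right_cancel_iff (a := v)]
        calc u * (l₀⁻¹ * (l₀ * u⁻¹ * (v⁻¹ * r₀⁻¹)) * r₀) * v = 1 := by group
        _ = u * (l₀⁻¹ * g * r₀) * v := this.symm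
      exact this.symm
    · obtain ⟨n, u, v, hu, hv, hg⟩ := dpath_iff.1 (hconn 1 l₀)
      obtain ⟨m, u', v', hu', hv', hg'⟩ := dpath_iff.1 (hconn 1 r₀⁻¹)
      refine ⟨n, m, ⟨l₀⁻¹ * u, v,
        isWord_congr (by ring) (isWord_mul (isWord_singleton (Set.inv_mem_inv.2 hl₀)) hu),
        hv, ?_⟩, ⟨u', v' * r₀, hu', isWord_mul hv' (isWord_singleton hr₀), ?_⟩⟩
      · have : u * v = l₀ := by rw [hg]; group
        rw [mul_assoc, this]; group
      · have : u' * v' = r₀⁻¹ := by rw [hg']; group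
        rw [← mul_assoc, this]; group
  · rintro ⟨h1, h2, i, j, ⟨u₁, v₁, hu₁, hv₁, huv₁⟩, ⟨u₂, v₂, hu₂, hv₂, huv₂⟩⟩
    have hv₁' : v₁ = u₁⁻¹ := eq_inv_of_mul_eq_one_right huv₁
    have hv₂' : v₂ = u₂⁻¹ := eq_inv_of_mul_eq_one_right huv₂
    subst hv₁' hv₂'
    have key1 : ∀ g : G, DPath L R g 1 := by
      intro g
      have hg : g ∈ WordSet L * WordSet R⁻¹ := by rw [h2]; trivial
      obtain ⟨a, ⟨p, _, ha⟩, b, ⟨q, _, hb⟩, hab⟩ := Set.mem_mul.1 hg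
      have hx : IsWord L⁻¹ p a⁻¹ := isWord_inv ha
      have hy : IsWord R q b⁻¹ := isWord_inv' hb
      refine dpath_iff.2 ⟨q * (i + 1) + p * j + p, u₁ ^ q * u₂ ^ p * a⁻¹,
        b⁻¹ * u₂⁻¹ ^ p * u₁⁻¹ ^ q, ?_, ?_, ?_⟩
      · exact isWord_mul (isWord_mul (isWord_pow q hu₁) (isWord_pow p hu₂)) hx
      · exact isWord_congr (by ring) (isWord_mul (isWord_mul hy (isWord_pow p hv₂)) (isWord_pow q hv₁))
      · have hg1 : a⁻¹ * g * b⁻¹ = 1 := by rw [← hab]; group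
        have hcalc : u₁ ^ q * u₂ ^ p * a⁻¹ * g * (b⁻¹ * u₂⁻¹ ^ p * u₁⁻¹ ^ q)
            = u₁ ^ q * u₂ ^ p * (a⁻¹ * g * b⁻¹) * u₂⁻¹ ^ p * u₁⁻¹ ^ q := by group
        rw [eq_comm, hcalc, hg1]; group
    have key2 : ∀ h : G, DPath L R 1 h := by
      intro h
      have hh : h ∈ WordSet L⁻¹ * WordSet R := by rw [h1]; trivial
      obtain ⟨a, ⟨p, _, ha⟩, b, ⟨q, _, hb⟩, hab⟩ := Set.mem_mul.1 hh
      refine dpath_iff.2 ⟨p + q * (i + 1) + p * j, a * u₁ ^ q * u₂ ^ p,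
        u₂⁻¹ ^ p * u₁⁻¹ ^ q * b, ?_, ?_, ?_⟩
      · exact isWord_mul (isWord_mul ha (isWord_pow q hu₁)) (isWord_pow p hu₂)
      · exact isWord_congr (by ring) (isWord_mul (isWord_mul (isWord_pow p hv₂) (isWord_pow q hv₁)) hb)
      · rw [← hab]; group
    intro g h
    exact ReflTransGen.trans (key1 g) (key2 h)

end Aux

theorem stmt_0 {G : Type*} [Group G] (L R : Set G) (hL : L.Nonempty) (hR : R.Nonempty) :
    (∀ g h : G, DPath L R g h) ↔
      (WordSet L⁻¹ * WordSet R = Set.univ ∧ WordSet L * WordSet R⁻¹ = Set.univ ∧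
        ∃ i j : ℕ,
          (∃ u v : G, IsWord L⁻¹ (i + 1) u ∧ IsWord R i v ∧ u * v = 1) ∧
          (∃ u v : G, IsWord L⁻¹ j u ∧ IsWord R (j + 1) v ∧ u * v = 1)) :=
  stmt_0' hL hR
end

section
/- In 2S(G;L,R), if W(L) and W(R) are subgroups of G, then two vertices g and h are weakly connected if and only if they are strongly connected. -/
open Relation

lemma dpath_of_lists {G : Type*} [Group G] (L R : Set G) :
    ∀ (A B : List G) (h : G), A.length = B.length → (∀ x ∈ A, x ∈ L) → (∀ x ∈ B, x ∈ R) →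
      DPath L R h (A.prod⁻¹ * h * B.prod) := by
  intro A
  induction A with
  | nil =>
    intro B h hlen _ _
    rw [List.length_nil] at hlen
    obtain rfl : B = [] := List.eq_nil_of_length_eq_zero hlen.symm
    simp only [List.prod_nil, inv_one, one_mul, mul_one]; exact ReflTransGen.refl
  | cons a A ih =>
    intro B h hlen hA hB
    match B with
    | [] => simp at hlen
    | b :: B =>
      simp only [List.length_cons, Nat.add_right_cancel_iff] at hlen
      have step : Arc L R h (a⁻¹ * h * b) :=
        ⟨a, hA a (by simp), b, hB b (by simp), rfl⟩
      have tail := ih B (a⁻¹ * h * b) hlen (fun x hx => hA x (by simp [hx]))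
        (fun x hx => hB x (by simp [hx]))
      have := ReflTransGen.head step tail
      convert this using 1
      simp [DPath, List.prod_cons, mul_assoc]

lemma mem_wordset_of_mem {G : Type*} [Group G] {S : Set G} {x : G} (hx : x ∈ S) :
    x ∈ WordSet S :=
  ⟨1, one_pos, [x], rfl, by simpa using hx, by simp⟩

lemma inv_mem_wordset {G : Type*} [Group G] {S : Set G} {x : G}
    (hW : ∃ H : Subgroup G, WordSet S = (H : Set G)) (hx : x ∈ S) : x⁻¹ ∈ WordSet S := by
  obtain ⟨H, hH⟩ := hW
  have : x ∈ (H : Set G) := hH ▸ mem_wordset_of_mem hx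
  have : x⁻¹ ∈ (H : Set G) := H.inv_mem this
  rwa [← hH] at this

lemma dpath_rev {G : Type*} [Group G] {L R : Set G}
    (hWL : ∃ H : Subgroup G, WordSet L = (H : Set G))
    (hWR : ∃ H : Subgroup G, WordSet R = (H : Set G))
    {g h : G} (harc : Arc L R g h) : DPath L R h g := by
  obtain ⟨l, hl, r, hr, rfl⟩ := harc
  obtain ⟨m, hm, u, hulen, humem, huprod⟩ := inv_mem_wordset hWL hl
  obtain ⟨n, hn, v, hvlen, hvmem, hvprod⟩ := inv_mem_wordset hWR hr
  set A : List G := u ++ (List.replicate v.length (l :: u)).flatten with hA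
  set B : List G := v ++ (List.replicate u.length (r :: v)).flatten with hB
  have hAlen : A.length = u.length + v.length * (u.length + 1) := by
    simp [hA, List.length_flatten, List.length_replicate, Nat.mul_comm]
  have hBlen : B.length = v.length + u.length * (v.length + 1) := by
    simp [hB, List.length_flatten, List.length_replicate, Nat.mul_comm]
  have hlen : A.length = B.length := by rw [hAlen, hBlen]; ring
  have hAprod : A.prod = l⁻¹ := by
    have h1 : (l :: u).prod = 1 := by
      rw [List.prod_cons, huprod, mul_inv_cancel]
    simp [hA, List.prod_flatten, List.map_replicate, List.prod_replicate, h1, huprod]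
  have hBprod : B.prod = r⁻¹ := by
    have h1 : (r :: v).prod = 1 := by
      rw [List.prod_cons, hvprod, mul_inv_cancel]
    simp [hB, List.prod_flatten, List.map_replicate, List.prod_replicate, h1, hvprod]
  have hAmem : ∀ x ∈ A, x ∈ L := by
    intro x hx
    simp only [hA, List.mem_append, List.mem_flatten, List.mem_replicate] at hx
    rcases hx with hx | ⟨s, ⟨_, rfl⟩, hx⟩
    · exact humem x hx
    · rcases List.mem_cons.mp hx with rfl | hx
      · exact hl
      · exact humem x hx
  have hBmem : ∀ x ∈ B, x ∈ R := by
    intro x hx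
    simp only [hB, List.mem_append, List.mem_flatten, List.mem_replicate] at hx
    rcases hx with hx | ⟨s, ⟨_, rfl⟩, hx⟩
    · exact hvmem x hx
    · rcases List.mem_cons.mp hx with rfl | hx
      · exact hr
      · exact hvmem x hx
  have := dpath_of_lists L R A B (l⁻¹ * g * r) hlen hAmem hBmem
  rw [hAprod, hBprod] at this
  convert this using 1
  group

theorem stmt_5 {G : Type*} [Group G] (L R : Set G) (hL : L.Nonempty) (hR : R.Nonempty)
    (hWL : ∃ H : Subgroup G, WordSet L = (H : Set G))
    (hWR : ∃ H : Subgroup G, WordSet R = (H : Set G)) :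
    ∀ g h : G, WeakConn L R g h ↔ StrongConn L R g h := by
  intro g h
  constructor
  · intro hw
    induction hw with
    | refl => exact ⟨ReflTransGen.refl, ReflTransGen.refl⟩
    | @tail b c _ step ih =>
      have hbc : StrongConn L R b c := by
        rcases step with harc | harc
        · exact ⟨ReflTransGen.single harc, dpath_rev hWL hWR harc⟩
        · exact ⟨dpath_rev hWL hWR harc, ReflTransGen.single harc⟩
      exact ⟨ih.1.trans hbc.1, hbc.2.trans ih.2⟩
  · rintro ⟨hgh, hhg⟩
    exact ReflTransGen.mono (fun a b hab => Or.inl hab) g h hgh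
end

section
/- In 2S(G;L,R), if g = w₁ s w₂ where s ∈ G, w₁ is a word involving m factors from L and a factors from L⁻¹ (in any order), and w₂ is a word involving n factors from R and b factors from R⁻¹, then g is weakly connected to l^d s and to s r^d for any l ∈ L and r ∈ R, where d = m + n − (a + b). -/
open Relation

/-- `w` is a product, in any order, of `m` factors from `S` and `a` factors from `S⁻¹`. -/
def MixedWord {G : Type*} [Group G] (S : Set G) (m a : ℕ) (w : G) : Prop :=
  ∃ l : List (G × Bool),
    (∀ p ∈ l, (p.2 = true → p.1 ∈ S) ∧ (p.2 = false → p.1 ∈ S⁻¹)) ∧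
    (l.filter (fun p => p.2)).length = m ∧
    (l.filter (fun p => !p.2)).length = a ∧
    (l.map Prod.fst).prod = w

section Aux

variable {G : Type*} [Group G] {L R : Set G}

lemma weakConn_symm {g h : G} (hgh : WeakConn L R g h) : WeakConn L R h g :=
  haveI : Std.Symm (fun g h : G => Arc L R g h ∨ Arc L R h g) := ⟨fun _ _ hx => hx.symm⟩
  Std.Symm.symm (r := ReflTransGen (fun g h : G => Arc L R g h ∨ Arc L R h g)) _ _ hgh

lemma moveL_pos {x : G} (hx : x ∈ L) {r : G} (hr : r ∈ R) (u : G) :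
    WeakConn L R (x * u) (u * r) :=
  Relation.ReflTransGen.single (Or.inl ⟨x, hx, r, hr, by group⟩)

lemma moveL_neg {x : G} (hx : x ∈ L⁻¹) {r : G} (hr : r ∈ R) (u : G) :
    WeakConn L R (x * u) (u * r⁻¹) :=
  Relation.ReflTransGen.single (Or.inr ⟨x⁻¹, Set.mem_inv.mp hx, r, hr, by group⟩)

lemma moveR_pos {y : G} (hy : y ∈ R) {l : G} (hl : l ∈ L) (u : G) :
    WeakConn L R (u * y) (l * u) :=
  Relation.ReflTransGen.single (Or.inr ⟨l, hl, y, hy, by group⟩)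

lemma moveR_neg {y : G} (hy : y ∈ R⁻¹) {l : G} (hl : l ∈ L) (u : G) :
    WeakConn L R (u * y) (l⁻¹ * u) :=
  Relation.ReflTransGen.single (Or.inl ⟨l, hl, y⁻¹, Set.mem_inv.mp hy, by group⟩)

lemma shift {l r : G} (hl : l ∈ L) (hr : r ∈ R) (e : ℤ) :
    ∀ u : G, WeakConn L R (u * r ^ e) (l ^ e * u) := by
  induction e using Int.induction_on with
  | zero =>
      intro u
      rw [zpow_zero, zpow_zero, mul_one, one_mul]
      exact Relation.ReflTransGen.refl
  | succ k ih =>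
      intro u
      have h1 := ih (u * r)
      have h2 := moveR_pos hr hl (l ^ (k : ℤ) * u)
      rw [mul_assoc] at h2
      have e1 : u * r ^ ((k : ℤ) + 1) = (u * r) * r ^ (k : ℤ) := by group
      have e2 : l ^ ((k : ℤ) + 1) * u = l * (l ^ (k : ℤ) * u) := by group
      rw [e1, e2]
      exact h1.trans h2
  | pred k ih =>
      intro u
      have h1 := ih (u * r⁻¹)
      have h2 := moveR_neg (Set.inv_mem_inv.mpr hr) hl (l ^ (-(k : ℤ)) * u)
      rw [mul_assoc] at h2
      have e1 : u * r ^ (-(k : ℤ) - 1) = (u * r⁻¹) * r ^ (-(k : ℤ)) := by group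
      have e2 : l ^ (-(k : ℤ) - 1) * u = l⁻¹ * (l ^ (-(k : ℤ)) * u) := by group
      rw [e1, e2]
      exact h1.trans h2

lemma peelL {r : G} (hr : r ∈ R) :
    ∀ lst : List (G × Bool),
      (∀ p ∈ lst, (p.2 = true → p.1 ∈ L) ∧ (p.2 = false → p.1 ∈ L⁻¹)) →
      ∀ u : G, WeakConn L R ((lst.map Prod.fst).prod * u)
        (u * r ^ (((lst.filter (fun p => p.2)).length : ℤ)
                  - ((lst.filter (fun p => !p.2)).length : ℤ))) := by
  intro lst
  induction lst with
  | nil =>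
      intro _ u
      simpa [WeakConn] using (Relation.ReflTransGen.refl : WeakConn L R u u)
  | cons p t ih =>
      intro hmem u
      obtain ⟨x, bx⟩ := p
      have hx := hmem (x, bx) List.mem_cons_self
      have hmem' : ∀ q ∈ t, (q.2 = true → q.1 ∈ L) ∧ (q.2 = false → q.1 ∈ L⁻¹) :=
        fun q hq => hmem q (List.mem_cons_of_mem _ hq)
      set T := (t.map Prod.fst).prod with hT
      set kp : ℤ := ((t.filter (fun p => p.2)).length : ℤ) with hkp
      set kn : ℤ := ((t.filter (fun p => !p.2)).length : ℤ) with hkn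
      cases bx with
      | true =>
          have hxL : x ∈ L := hx.1 rfl
          have h1 : WeakConn L R (x * (T * u)) (T * (u * r)) := by
            have := moveL_pos hxL hr (T * u)
            rwa [mul_assoc] at this
          have h2 := ih hmem' (u * r)
          have e1 : (((((x, true) : G × Bool) :: t).map Prod.fst).prod * u) = x * (T * u) := by
            simp [hT, mul_assoc]
          have e2 : u * r ^ ((((((x, true) : G × Bool) :: t).filter (fun p => p.2)).length : ℤ)
                  - ((((((x, true) : G × Bool) :: t).filter (fun p => !p.2)).length : ℤ)))
              = (u * r) * r ^ (kp - kn) := by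
            simp only [List.filter_cons]
            norm_num [hkp, hkn]
            push_cast
            group
          rw [e1, e2]
          exact h1.trans h2
      | false =>
          have hxL : x ∈ L⁻¹ := hx.2 rfl
          have h1 : WeakConn L R (x * (T * u)) (T * (u * r⁻¹)) := by
            have := moveL_neg hxL hr (T * u)
            rwa [mul_assoc] at this
          have h2 := ih hmem' (u * r⁻¹)
          have e1 : (((((x, false) : G × Bool) :: t).map Prod.fst).prod * u) = x * (T * u) := by
            simp [hT, mul_assoc]
          have e2 : u * r ^ ((((((x, false) : G × Bool) :: t).filter (fun p => p.2)).length : ℤ)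
                  - ((((((x, false) : G × Bool) :: t).filter (fun p => !p.2)).length : ℤ)))
              = (u * r⁻¹) * r ^ (kp - kn) := by
            simp only [List.filter_cons]
            norm_num [hkp, hkn]
            push_cast
            group
          rw [e1, e2]
          exact h1.trans h2

lemma peelR {l : G} (hl : l ∈ L) :
    ∀ lst : List (G × Bool),
      (∀ p ∈ lst, (p.2 = true → p.1 ∈ R) ∧ (p.2 = false → p.1 ∈ R⁻¹)) →
      ∀ u : G, WeakConn L R (u * (lst.map Prod.fst).prod)
        (l ^ (((lst.filter (fun p => p.2)).length : ℤ)
                  - ((lst.filter (fun p => !p.2)).length : ℤ)) * u) := by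
  intro lst
  induction lst with
  | nil =>
      intro _ u
      simpa [WeakConn] using (Relation.ReflTransGen.refl : WeakConn L R u u)
  | cons p t ih =>
      intro hmem u
      obtain ⟨y, by'⟩ := p
      have hy := hmem (y, by') List.mem_cons_self
      have hmem' : ∀ q ∈ t, (q.2 = true → q.1 ∈ R) ∧ (q.2 = false → q.1 ∈ R⁻¹) :=
        fun q hq => hmem q (List.mem_cons_of_mem _ hq)
      set T := (t.map Prod.fst).prod with hT
      set kp : ℤ := ((t.filter (fun p => p.2)).length : ℤ) with hkp
      set kn : ℤ := ((t.filter (fun p => !p.2)).length : ℤ) with hkn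
      cases by' with
      | true =>
          have hyR : y ∈ R := hy.1 rfl
          have h2 := ih hmem' (u * y)
          have h1 : WeakConn L R (l ^ (kp - kn) * (u * y)) (l * (l ^ (kp - kn) * u)) := by
            have := moveR_pos hyR hl (l ^ (kp - kn) * u)
            rwa [mul_assoc] at this
          have e1 : (u * ((((y, true) : G × Bool) :: t).map Prod.fst).prod) = (u * y) * T := by
            simp [hT, mul_assoc]
          have e2 : l ^ ((((((y, true) : G × Bool) :: t).filter (fun p => p.2)).length : ℤ)
                  - ((((((y, true) : G × Bool) :: t).filter (fun p => !p.2)).length : ℤ))) * u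
              = l * (l ^ (kp - kn) * u) := by
            simp only [List.filter_cons]
            norm_num [hkp, hkn]
            push_cast
            group
          rw [e1, e2]
          exact h2.trans h1
      | false =>
          have hyR : y ∈ R⁻¹ := hy.2 rfl
          have h2 := ih hmem' (u * y)
          have h1 : WeakConn L R (l ^ (kp - kn) * (u * y)) (l⁻¹ * (l ^ (kp - kn) * u)) := by
            have := moveR_neg hyR hl (l ^ (kp - kn) * u)
            rwa [mul_assoc] at this
          have e1 : (u * ((((y, false) : G × Bool) :: t).map Prod.fst).prod) = (u * y) * T := by
            simp [hT, mul_assoc]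
          have e2 : l ^ ((((((y, false) : G × Bool) :: t).filter (fun p => p.2)).length : ℤ)
                  - ((((((y, false) : G × Bool) :: t).filter (fun p => !p.2)).length : ℤ))) * u
              = l⁻¹ * (l ^ (kp - kn) * u) := by
            simp only [List.filter_cons]
            norm_num [hkp, hkn]
            push_cast
            group
          rw [e1, e2]
          exact h2.trans h1

end Aux

theorem stmt_6 {G : Type*} [Group G] (L R : Set G) (hL : L.Nonempty) (hR : R.Nonempty)
    (g s w₁ w₂ : G) (m a n b : ℕ)
    (h₁ : MixedWord L m a w₁) (h₂ : MixedWord R n b w₂) (hg : g = w₁ * s * w₂)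
    (d : ℤ) (hd : d = (m : ℤ) + n - ((a : ℤ) + b))
    (l r : G) (hl : l ∈ L) (hr : r ∈ R) :
    WeakConn L R g (l ^ d * s) ∧ WeakConn L R g (s * r ^ d) := by
  obtain ⟨lst₁, hmem₁, hm₁, ha₁, hprod₁⟩ := h₁
  obtain ⟨lst₂, hmem₂, hm₂, ha₂, hprod₂⟩ := h₂
  subst hd
  constructor
  · -- g ~ l^d * s
    have A : WeakConn L R g ((s * w₂) * r ^ ((m : ℤ) - a)) := by
      have := peelL hr lst₁ hmem₁ (s * w₂)
      rw [hprod₁, hm₁, ha₁] at this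
      rwa [hg, mul_assoc]
    have B : WeakConn L R ((s * w₂) * r ^ ((m : ℤ) - a)) (l ^ ((m : ℤ) - a) * (s * w₂)) :=
      shift hl hr _ _
    have C : WeakConn L R ((l ^ ((m : ℤ) - a) * s) * w₂)
        (l ^ ((n : ℤ) - b) * (l ^ ((m : ℤ) - a) * s)) := by
      have := peelR hl lst₂ hmem₂ (l ^ ((m : ℤ) - a) * s)
      rwa [hprod₂, hm₂, ha₂] at this
    have eC : l ^ ((m : ℤ) - a) * (s * w₂) = (l ^ ((m : ℤ) - a) * s) * w₂ := by
      rw [mul_assoc]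
    have efin : l ^ ((n : ℤ) - b) * (l ^ ((m : ℤ) - a) * s)
        = l ^ ((m : ℤ) + n - ((a : ℤ) + b)) * s := by
      group
    rw [eC] at B
    rw [efin] at C
    exact (A.trans B).trans C
  · -- g ~ s * r^d
    have A : WeakConn L R g (l ^ ((n : ℤ) - b) * (w₁ * s)) := by
      have := peelR hl lst₂ hmem₂ (w₁ * s)
      rw [hprod₂, hm₂, ha₂] at this
      rwa [hg]
    have B : WeakConn L R (l ^ ((n : ℤ) - b) * (w₁ * s)) ((w₁ * s) * r ^ ((n : ℤ) - b)) :=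
      weakConn_symm (shift hl hr _ _)
    have C : WeakConn L R (w₁ * (s * r ^ ((n : ℤ) - b)))
        ((s * r ^ ((n : ℤ) - b)) * r ^ ((m : ℤ) - a)) := by
      have := peelL hr lst₁ hmem₁ (s * r ^ ((n : ℤ) - b))
      rwa [hprod₁, hm₁, ha₁] at this
    have eB : (w₁ * s) * r ^ ((n : ℤ) - b) = w₁ * (s * r ^ ((n : ℤ) - b)) := by
      rw [mul_assoc]
    have efin : (s * r ^ ((n : ℤ) - b)) * r ^ ((m : ℤ) - a)
        = s * r ^ ((m : ℤ) + n - ((a : ℤ) + b)) := by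
      group
    rw [eB] at B
    rw [efin] at C
    exact (A.trans B).trans C
end

section
/- In 2S(G;L,R), there exist two words in L of different lengths that are weakly connected to each other (as vertices) if and only if there is a word in L that is weakly connected to the identity e. Moreover, there exists a word in L of length n weakly connected to e if and only if there exists a word in L⁻¹ of length n weakly connected to e. -/
open Relation

section Aux

variable {G : Type*} [Group G] {L R : Set G} {l₀ r₀ : G}

lemma wconn_refl (g : G) : WeakConn L R g g := ReflTransGen.refl

lemma wstep_fwd (g : G) {l r : G} (hl : l ∈ L) (hr : r ∈ R) :
    WeakConn L R g (l⁻¹ * g * r) :=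
  ReflTransGen.single (Or.inl ⟨l, hl, r, hr, rfl⟩)

lemma wstep_bwd (g : G) {l r : G} (hl : l ∈ L) (hr : r ∈ R) :
    WeakConn L R g (l * g * r⁻¹) :=
  ReflTransGen.single (Or.inr ⟨l, hl, r, hr, by group⟩)

lemma wconn_symm {g h : G} (hc : WeakConn L R g h) : WeakConn L R h g :=
  (@ReflTransGen.stdSymm _ _ ⟨fun _ _ hx => hx.symm⟩).symm _ _ hc

lemma conn_zpow (hl : l₀ ∈ L) (hr : r₀ ∈ R) (k : ℤ) (g : G) :
    WeakConn L R g (l₀ ^ (-k) * g * r₀ ^ k) := by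
  induction k using Int.induction_on with
  | zero => simpa using wconn_refl g
  | succ k ih =>
      refine ih.trans ?_
      have h := wstep_fwd (L := L) (R := R) (l₀ ^ (-(k:ℤ)) * g * r₀ ^ (k:ℤ)) hl hr
      have he : l₀⁻¹ * (l₀ ^ (-(k:ℤ)) * g * r₀ ^ (k:ℤ)) * r₀
          = l₀ ^ (-((k:ℤ)+1)) * g * r₀ ^ ((k:ℤ)+1) := by group
      rwa [he] at h
  | pred k ih =>
      refine ih.trans ?_
      have h := wstep_bwd (L := L) (R := R) (l₀ ^ (-(-(k:ℤ))) * g * r₀ ^ (-(k:ℤ))) hl hr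
      have he : l₀ * (l₀ ^ (-(-(k:ℤ))) * g * r₀ ^ (-(k:ℤ))) * r₀⁻¹
          = l₀ ^ (-(-(k:ℤ)-1)) * g * r₀ ^ (-(k:ℤ)-1) := by group
      rwa [he] at h

lemma hs_mul {s s' : G} (hs : ∀ x, WeakConn L R (s * x) x)
    (hs' : ∀ x, WeakConn L R (s' * x) x) :
    ∀ x, WeakConn L R (s * s' * x) x := fun x => by
  have h1 := hs (s' * x)
  rw [← mul_assoc] at h1
  exact h1.trans (hs' x)

lemma ks_mul {t t' : G} (ht : ∀ x, WeakConn L R (x * t) x)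
    (ht' : ∀ x, WeakConn L R (x * t') x) :
    ∀ x, WeakConn L R (x * (t * t')) x := fun x => by
  have h1 := ht' (x * t)
  rw [← mul_assoc]
  exact h1.trans (ht x)

lemma hs_conj (hl : l₀ ∈ L) (hr : r₀ ∈ R) {s : G}
    (hs : ∀ x, WeakConn L R (s * x) x) (k : ℤ) :
    ∀ x, WeakConn L R (l₀ ^ k * s * l₀ ^ (-k) * x) x := fun x => by
  have h1 := conn_zpow hl hr k (l₀ ^ k * s * l₀ ^ (-k) * x)
  have he : l₀ ^ (-k) * (l₀ ^ k * s * l₀ ^ (-k) * x) * r₀ ^ k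
      = s * (l₀ ^ (-k) * x * r₀ ^ k) := by group
  rw [he] at h1
  exact h1.trans ((hs (l₀ ^ (-k) * x * r₀ ^ k)).trans (wconn_symm (conn_zpow hl hr k x)))

lemma ks_conj (hl : l₀ ∈ L) (hr : r₀ ∈ R) {t : G}
    (ht : ∀ x, WeakConn L R (x * t) x) (k : ℤ) :
    ∀ x, WeakConn L R (x * (r₀ ^ k * t * r₀ ^ (-k))) x := fun x => by
  have h1 := conn_zpow hl hr k (x * (r₀ ^ k * t * r₀ ^ (-k)))
  have he : l₀ ^ (-k) * (x * (r₀ ^ k * t * r₀ ^ (-k))) * r₀ ^ k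
      = l₀ ^ (-k) * x * r₀ ^ k * t := by group
  rw [he] at h1
  exact h1.trans ((ht (l₀ ^ (-k) * x * r₀ ^ k)).trans (wconn_symm (conn_zpow hl hr k x)))

lemma hs_gen1 (hr : r₀ ∈ R) {l l' : G} (hl : l ∈ L) (hl' : l' ∈ L) :
    ∀ x, WeakConn L R (l * l'⁻¹ * x) x := fun x => by
  have h1 := wstep_fwd (L := L) (R := R) (l * l'⁻¹ * x) hl hr
  have he : l⁻¹ * (l * l'⁻¹ * x) * r₀ = l'⁻¹ * x * r₀ := by group
  rw [he] at h1
  exact h1.trans (wconn_symm (wstep_fwd x hl' hr))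

lemma hs_gen2 (hr : r₀ ∈ R) {l l' : G} (hl : l ∈ L) (hl' : l' ∈ L) :
    ∀ x, WeakConn L R (l⁻¹ * l' * x) x := fun x => by
  have h1 := wstep_bwd (L := L) (R := R) (l⁻¹ * l' * x) hl hr
  have he : l * (l⁻¹ * l' * x) * r₀⁻¹ = l' * x * r₀⁻¹ := by group
  rw [he] at h1
  exact h1.trans (wconn_symm (wstep_bwd x hl' hr))

lemma ks_gen1 (hl : l₀ ∈ L) {r r' : G} (hr : r ∈ R) (hr' : r' ∈ R) :
    ∀ x, WeakConn L R (x * (r * r'⁻¹)) x := fun x => by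
  have h1 := wstep_fwd (L := L) (R := R) (x * (r * r'⁻¹)) hl hr'
  have he : l₀⁻¹ * (x * (r * r'⁻¹)) * r' = l₀⁻¹ * x * r := by group
  rw [he] at h1
  exact h1.trans (wconn_symm (wstep_fwd x hl hr))

lemma ks_gen2 (hl : l₀ ∈ L) {r r' : G} (hr : r ∈ R) (hr' : r' ∈ R) :
    ∀ x, WeakConn L R (x * (r⁻¹ * r')) x := fun x => by
  have h1 := wstep_bwd (L := L) (R := R) (x * (r⁻¹ * r')) hl hr'
  have he : l₀ * (x * (r⁻¹ * r')) * r'⁻¹ = l₀ * x * r⁻¹ := by group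
  rw [he] at h1
  exact h1.trans (wconn_symm (wstep_bwd x hl hr))

lemma conn_pattern (hl : l₀ ∈ L) (hr : r₀ ∈ R) {s t : G}
    (hs : ∀ x, WeakConn L R (s * x) x) (ht : ∀ x, WeakConn L R (x * t) x)
    (σ : ℤ) (g : G) : WeakConn L R (l₀ ^ (-σ) * s * g * r₀ ^ σ * t) g := by
  have h1 := ht (l₀ ^ (-σ) * s * g * r₀ ^ σ)
  have h2 := wconn_symm (conn_zpow hl hr σ (s * g))
  have he2 : l₀ ^ (-σ) * (s * g) * r₀ ^ σ = l₀ ^ (-σ) * s * g * r₀ ^ σ := by group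
  rw [he2] at h2
  exact h1.trans (h2.trans (hs g))

/-- Path decomposition lemma. -/
lemma decomp (hl : l₀ ∈ L) (hr : r₀ ∈ R) {g h : G} (hc : WeakConn L R g h) :
    ∃ (σ : ℤ) (s t : G), (∀ x, WeakConn L R (s * x) x) ∧ (∀ x, WeakConn L R (x * t) x) ∧
      h = l₀ ^ (-σ) * s * g * r₀ ^ σ * t := by
  induction hc with
  | refl =>
      refine ⟨0, 1, 1, fun x => by simpa using wconn_refl x,
        fun x => by simpa using wconn_refl x, by simp⟩
  | @tail b c _ hstep ih =>
      obtain ⟨σ, s, t, hs, ht, heq⟩ := ih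
      rcases hstep with ⟨l, hl', r, hr', hcc⟩ | ⟨l, hl', r, hr', hcc⟩
      · -- forward: c = l⁻¹ * b * r
        refine ⟨σ + 1, l₀ ^ (σ+1) * l⁻¹ * l₀ ^ (-σ) * s, r₀⁻¹ * t * r, ?_, ?_, ?_⟩
        · have hseq : l₀ ^ (σ+1) * l⁻¹ * l₀ ^ (-σ) * s
              = (l₀ ^ σ * (l₀ * l⁻¹) * l₀ ^ (-σ)) * s := by group
          rw [hseq]
          exact hs_mul (hs_conj hl hr (hs_gen1 hr hl hl') σ) hs
        · have hteq : r₀⁻¹ * t * r = (r₀ ^ (-1:ℤ) * t * r₀ ^ (-(-1:ℤ))) * (r₀⁻¹ * r) := by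
            group
          rw [hteq]
          exact ks_mul (ks_conj hl hr ht (-1)) (ks_gen2 hl hr hr')
        · rw [hcc, heq]; group
      · -- backward: b = l⁻¹ * c * r, so c = l * b * r⁻¹
        have hcc' : c = l * b * r⁻¹ := by rw [hcc]; group
        refine ⟨σ - 1, l₀ ^ (σ-1) * l * l₀ ^ (-σ) * s, r₀ * t * r⁻¹, ?_, ?_, ?_⟩
        · have hseq : l₀ ^ (σ-1) * l * l₀ ^ (-σ) * s
              = (l₀ ^ (σ-1) * (l * l₀⁻¹) * l₀ ^ (-(σ-1))) * s := by group
          rw [hseq]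
          exact hs_mul (hs_conj hl hr (hs_gen1 hr hl' hl) (σ-1)) hs
        · have hteq : r₀ * t * r⁻¹ = (r₀ ^ (1:ℤ) * t * r₀ ^ (-(1:ℤ))) * (r₀ * r⁻¹) := by
            group
          rw [hteq]
          exact ks_mul (ks_conj hl hr ht 1) (ks_gen1 hl hr hr')
        · rw [hcc', heq]; group

lemma psi_sub (hl : l₀ ∈ L) (hr : r₀ ∈ R) {a b : ℤ}
    (hc : WeakConn L R (l₀ ^ a) (l₀ ^ b)) :
    WeakConn L R (l₀ ^ (b - a)) 1 := by
  obtain ⟨σ, s, t, hs, ht, heq⟩ := decomp hl hr hc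
  have hs2 := hs_conj hl hr hs (-a)
  simp only [neg_neg] at hs2
  have hp := conn_pattern hl hr hs2 ht σ 1
  have he : l₀ ^ (-σ) * (l₀ ^ (-a) * s * l₀ ^ a) * 1 * r₀ ^ σ * t = l₀ ^ (b - a) := by
    have h1 : l₀ ^ (-σ) * (l₀ ^ (-a) * s * l₀ ^ a) * 1 * r₀ ^ σ * t
        = l₀ ^ (-a) * (l₀ ^ (-σ) * s * l₀ ^ a * r₀ ^ σ * t) := by group
    rw [h1, ← heq]
    group
  rwa [he] at hp

lemma psi_add_conn (hl : l₀ ∈ L) (hr : r₀ ∈ R) {a : ℤ}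
    (ha : WeakConn L R (l₀ ^ a) 1) (c : ℤ) :
    WeakConn L R (l₀ ^ (a + c)) (l₀ ^ c) := by
  have h0 : WeakConn L R (l₀ ^ a) (l₀ ^ (0:ℤ)) := by simpa using ha
  have hneg : WeakConn L R (l₀ ^ (-a)) 1 := by simpa using psi_sub hl hr h0
  obtain ⟨σ, s, t, hs, ht, heq⟩ := decomp hl hr hneg
  have hs' := hs_conj hl hr hs (a + c)
  have hp := conn_pattern hl hr hs' ht σ (l₀ ^ c)
  have he : l₀ ^ (-σ) * (l₀ ^ (a+c) * s * l₀ ^ (-(a+c))) * l₀ ^ c * r₀ ^ σ * t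
      = l₀ ^ (a + c) := by
    have h1 : l₀ ^ (-σ) * (l₀ ^ (a+c) * s * l₀ ^ (-(a+c))) * l₀ ^ c * r₀ ^ σ * t
        = l₀ ^ (a+c) * (l₀ ^ (-σ) * s * l₀ ^ (-a) * r₀ ^ σ * t) := by group
    rw [h1, ← heq, mul_one]
  rwa [he] at hp

lemma list_conn_rpow (hr : r₀ ∈ R) :
    ∀ (lst : List G), (∀ x ∈ lst, x ∈ L) → ∀ j : ℕ,
      WeakConn L R (lst.prod * r₀ ^ j) (r₀ ^ (j + lst.length))
  | [], _, j => by
      simp only [List.prod_nil, one_mul, List.length_nil, Nat.add_zero]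
      exact wconn_refl _
  | a :: tl, hmem, j => by
      have ha : a ∈ L := hmem a List.mem_cons_self
      have h1 := wstep_fwd (L := L) (R := R) ((a :: tl).prod * r₀ ^ j) ha hr
      have he : a⁻¹ * ((a :: tl).prod * r₀ ^ j) * r₀ = tl.prod * r₀ ^ (j+1) := by
        rw [List.prod_cons, pow_succ]
        group
      rw [he] at h1
      have h2 := list_conn_rpow hr tl (fun x hx => hmem x (List.mem_cons_of_mem _ hx)) (j+1)
      have h3 : j + 1 + tl.length = j + (a :: tl).length := by
        simp [List.length_cons]; omega
      rw [h3] at h2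
      exact h1.trans h2

lemma list_conn_rpow_inv (hr : r₀ ∈ R) :
    ∀ (lst : List G), (∀ x ∈ lst, x ∈ L⁻¹) → ∀ j : ℕ,
      WeakConn L R (lst.prod * (r₀⁻¹) ^ j) ((r₀⁻¹) ^ (j + lst.length))
  | [], _, j => by
      simp only [List.prod_nil, one_mul, List.length_nil, Nat.add_zero]
      exact wconn_refl _
  | a :: tl, hmem, j => by
      have ha : a⁻¹ ∈ L := Set.mem_inv.mp (hmem a List.mem_cons_self)
      have h1 := wstep_bwd (L := L) (R := R) ((a :: tl).prod * (r₀⁻¹) ^ j) ha hr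
      have he : a⁻¹ * ((a :: tl).prod * (r₀⁻¹) ^ j) * r₀⁻¹ = tl.prod * (r₀⁻¹) ^ (j+1) := by
        rw [List.prod_cons, pow_succ]
        group
      rw [he] at h1
      have h2 := list_conn_rpow_inv hr tl (fun x hx => hmem x (List.mem_cons_of_mem _ hx)) (j+1)
      have h3 : j + 1 + tl.length = j + (a :: tl).length := by
        simp [List.length_cons]; omega
      rw [h3] at h2
      exact h1.trans h2

lemma word_conn (hr : r₀ ∈ R) {n : ℕ} {w : G} (hw : IsWord L n w) :
    WeakConn L R w (r₀ ^ n) := by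
  obtain ⟨lst, hlen, hmem, hprod⟩ := hw
  have h := list_conn_rpow hr lst hmem 0
  simpa [hprod, hlen] using h

lemma word_conn_inv (hr : r₀ ∈ R) {n : ℕ} {w : G} (hw : IsWord L⁻¹ n w) :
    WeakConn L R w ((r₀⁻¹) ^ n) := by
  obtain ⟨lst, hlen, hmem, hprod⟩ := hw
  have h := list_conn_rpow_inv hr lst hmem 0
  simpa [hprod, hlen] using h

lemma isword_pow (hl : l₀ ∈ L) (n : ℕ) : IsWord L n (l₀ ^ n) :=
  ⟨List.replicate n l₀, List.length_replicate ..,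
    fun x hx => by rw [List.eq_of_mem_replicate hx]; exact hl,
    List.prod_replicate ..⟩

lemma isword_pow_inv (hl : l₀ ∈ L) (n : ℕ) : IsWord L⁻¹ n ((l₀⁻¹) ^ n) :=
  ⟨List.replicate n l₀⁻¹, List.length_replicate ..,
    fun x hx => by rw [List.eq_of_mem_replicate hx]; exact Set.inv_mem_inv.mpr hl,
    List.prod_replicate ..⟩

/-- Any `L`-word of length `n` connected to `1` gives `l₀^n` connected to `1`. -/
lemma psi_of_word (hl : l₀ ∈ L) (hr : r₀ ∈ R) {n : ℕ} {w : G}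
    (hw : IsWord L n w) (hc : WeakConn L R w 1) :
    WeakConn L R (l₀ ^ (n:ℤ)) 1 := by
  have h1 := word_conn (L := L) hr hw
  have h2 := word_conn (L := L) hr (isword_pow hl n)
  have h := (h2.trans (wconn_symm h1)).trans hc
  rwa [zpow_natCast]

lemma psi_of_word_inv (hl : l₀ ∈ L) (hr : r₀ ∈ R) {n : ℕ} {w : G}
    (hw : IsWord L⁻¹ n w) (hc : WeakConn L R w 1) :
    WeakConn L R (l₀ ^ (-(n:ℤ))) 1 := by
  have h1 := word_conn_inv (L := L) hr hw
  have h2 := word_conn_inv (L := L) hr (isword_pow_inv hl n)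
  have h := (h2.trans (wconn_symm h1)).trans hc
  rwa [zpow_neg, zpow_natCast, ← inv_pow]

lemma psi_neg (hl : l₀ ∈ L) (hr : r₀ ∈ R) {a : ℤ}
    (ha : WeakConn L R (l₀ ^ a) 1) : WeakConn L R (l₀ ^ (-a)) 1 := by
  have h0 : WeakConn L R (l₀ ^ a) (l₀ ^ (0:ℤ)) := by simpa using ha
  simpa using psi_sub hl hr h0

end Aux

theorem stmt_7 {G : Type*} [Group G] (L R : Set G) (hL : L.Nonempty) (hR : R.Nonempty) :
    ((∃ m n : ℕ, ∃ u v : G, m ≠ n ∧ 0 < m ∧ 0 < n ∧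
        IsWord L m u ∧ IsWord L n v ∧ WeakConn L R u v) ↔
      (∃ n : ℕ, 0 < n ∧ ∃ w : G, IsWord L n w ∧ WeakConn L R w 1)) ∧
    (∀ n : ℕ, 0 < n →
      ((∃ w : G, IsWord L n w ∧ WeakConn L R w 1) ↔
       (∃ w : G, IsWord L⁻¹ n w ∧ WeakConn L R w 1))) := by
  obtain ⟨l₀, hl⟩ := hL
  obtain ⟨r₀, hr⟩ := hR
  constructor
  · constructor
    · rintro ⟨m, n, u, v, hmn, hm, hn, hu, hv, hc⟩
      have h1 := word_conn (L := L) hr hu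
      have h2 := word_conn (L := L) hr (isword_pow hl m)
      have h3 := word_conn (L := L) hr hv
      have h4 := word_conn (L := L) hr (isword_pow hl n)
      have hmm : WeakConn L R (l₀ ^ (m:ℤ)) (l₀ ^ (n:ℤ)) := by
        have h : WeakConn L R (l₀ ^ m) (l₀ ^ n) :=
          ((h2.trans (wconn_symm h1)).trans hc).trans (h3.trans (wconn_symm h4))
        rwa [zpow_natCast, zpow_natCast]
      have hd := psi_sub hl hr hmm
      rcases Nat.lt_or_ge m n with hlt | hge
      · refine ⟨n - m, by omega, l₀ ^ (n - m), isword_pow hl _, ?_⟩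
        have he : ((n:ℤ) - m) = ((n - m : ℕ) : ℤ) := by omega
        rw [he, zpow_natCast] at hd
        exact hd
      · have hlt : n < m := by omega
        have hd2 := psi_neg hl hr hd
        refine ⟨m - n, by omega, l₀ ^ (m - n), isword_pow hl _, ?_⟩
        have he : (-((n:ℤ) - m)) = ((m - n : ℕ) : ℤ) := by omega
        rw [he, zpow_natCast] at hd2
        exact hd2
    · rintro ⟨n, hn, w, hw, hc⟩
      have hpsi := psi_of_word hl hr hw hc
      have h2n := psi_add_conn hl hr hpsi (n:ℤ)
      refine ⟨2*n, n, l₀ ^ (2*n), l₀ ^ n, by omega, by omega, hn,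
        isword_pow hl _, isword_pow hl _, ?_⟩
      have he : ((n:ℤ) + n) = ((2*n : ℕ) : ℤ) := by push_cast; ring
      rw [he, zpow_natCast, zpow_natCast] at h2n
      exact h2n
  · intro n _
    constructor
    · rintro ⟨w, hw, hc⟩
      have hpsi := psi_of_word hl hr hw hc
      have hneg := psi_neg hl hr hpsi
      refine ⟨(l₀⁻¹) ^ n, isword_pow_inv hl n, ?_⟩
      rwa [zpow_neg, zpow_natCast, ← inv_pow] at hneg
    · rintro ⟨w, hw, hc⟩
      have hpsi := psi_of_word_inv hl hr hw hc
      have hpos := psi_neg hl hr hpsi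
      refine ⟨l₀ ^ n, isword_pow hl n, ?_⟩
      rwa [neg_neg, zpow_natCast] at hpos
end

section
/- Let L and R be nonempty subsets of a group G with G = W(L∪L⁻¹)·W(R∪R⁻¹), and let k be the minimum weak connection length of G relative to (L,R), assumed finite. Then 2S(G;L,R) has exactly k weakly connected components, all of the same cardinality. -/
open Relation Pointwise

section Aux

variable {G : Type*} [Group G] {L R : Set G}

lemma wc_refl (x : G) : WeakConn L R x x := ReflTransGen.refl

lemma wc_symm {x y : G} (h : WeakConn L R x y) : WeakConn L R y x := by
  induction h with
  | refl => exact ReflTransGen.refl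
  | tail _ h2 ih => exact ReflTransGen.head (Or.symm h2) ih

lemma wc_trans {x y z : G} (h : WeakConn L R x y) (h' : WeakConn L R y z) :
    WeakConn L R x z := ReflTransGen.trans h h'

lemma wc_arc {x l r : G} (hl : l ∈ L) (hr : r ∈ R) :
    WeakConn L R x (l⁻¹ * x * r) :=
  ReflTransGen.single (Or.inl ⟨l, hl, r, hr, rfl⟩)

lemma wc_back {x l r : G} (hl : l ∈ L) (hr : r ∈ R) :
    WeakConn L R x (l * x * r⁻¹) :=
  ReflTransGen.single (Or.inr ⟨l, hl, r, hr, by group⟩)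

/-- γ is "left-good" if left multiplication by γ stays in the same weak component. -/
def Lgood (L R : Set G) (γ : G) : Prop := ∀ x : G, WeakConn L R x (γ * x)

/-- δ is "right-good" if right multiplication by δ stays in the same weak component. -/
def Rgood (L R : Set G) (δ : G) : Prop := ∀ x : G, WeakConn L R x (x * δ)

lemma Lgood_mul {a b : G} (ha : Lgood L R a) (hb : Lgood L R b) : Lgood L R (a * b) := by
  intro x
  have := (hb x).trans (ha (b * x))
  rw [mul_assoc]; exact this

lemma Lgood_inv {a : G} (ha : Lgood L R a) : Lgood L R a⁻¹ := by
  intro x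
  have := ha (a⁻¹ * x)
  simp only [mul_inv_cancel_left] at this
  exact wc_symm this

lemma Rgood_mul {a b : G} (ha : Rgood L R a) (hb : Rgood L R b) : Rgood L R (a * b) := by
  intro x
  have := (ha x).trans (hb (x * a))
  rw [← mul_assoc]; exact this

lemma Rgood_inv {a : G} (ha : Rgood L R a) : Rgood L R a⁻¹ := by
  intro x
  have := ha (x * a⁻¹)
  simp only [inv_mul_cancel_right] at this
  exact wc_symm this

lemma Lgood_mul_inv {l l' : G} (hl : l ∈ L) (hl' : l' ∈ L) (hr₀ : ∃ r₀, r₀ ∈ R) :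
    Lgood L R (l * l'⁻¹) := by
  obtain ⟨r₀, hr₀⟩ := hr₀
  intro x
  have h1 : WeakConn L R x (l'⁻¹ * x * r₀) := wc_arc hl' hr₀
  have h2 : WeakConn L R (l'⁻¹ * x * r₀) (l * (l'⁻¹ * x * r₀) * r₀⁻¹) := wc_back hl hr₀
  have h3 : l * (l'⁻¹ * x * r₀) * r₀⁻¹ = (l * l'⁻¹) * x := by group
  rw [h3] at h2
  exact h1.trans h2

lemma Lgood_inv_mul {l l' : G} (hl : l ∈ L) (hl' : l' ∈ L) (hr₀ : ∃ r₀, r₀ ∈ R) :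
    Lgood L R (l⁻¹ * l') := by
  obtain ⟨r₀, hr₀⟩ := hr₀
  intro x
  have h1 : WeakConn L R x (l' * x * r₀⁻¹) := wc_back hl' hr₀
  have h2 : WeakConn L R (l' * x * r₀⁻¹) (l⁻¹ * (l' * x * r₀⁻¹) * r₀) := wc_arc hl hr₀
  have h3 : l⁻¹ * (l' * x * r₀⁻¹) * r₀ = (l⁻¹ * l') * x := by group
  rw [h3] at h2
  exact h1.trans h2

lemma Rgood_mul_inv {r r' : G} (hr : r ∈ R) (hr' : r' ∈ R) (hl₀ : ∃ l₀, l₀ ∈ L) :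
    Rgood L R (r * r'⁻¹) := by
  obtain ⟨l₀, hl₀⟩ := hl₀
  intro x
  have h1 : WeakConn L R x (l₀⁻¹ * x * r) := wc_arc hl₀ hr
  have h2 : WeakConn L R (l₀⁻¹ * x * r) (l₀ * (l₀⁻¹ * x * r) * r'⁻¹) := wc_back hl₀ hr'
  have h3 : l₀ * (l₀⁻¹ * x * r) * r'⁻¹ = x * (r * r'⁻¹) := by group
  rw [h3] at h2
  exact h1.trans h2

lemma Rgood_inv_mul {r r' : G} (hr : r ∈ R) (hr' : r' ∈ R) (hl₀ : ∃ l₀, l₀ ∈ L) :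
    Rgood L R (r⁻¹ * r') := by
  obtain ⟨l₀, hl₀⟩ := hl₀
  intro x
  have h1 : WeakConn L R x (l₀ * x * r⁻¹) := wc_back hl₀ hr
  have h2 : WeakConn L R (l₀ * x * r⁻¹) (l₀⁻¹ * (l₀ * x * r⁻¹) * r') := wc_arc hl₀ hr'
  have h3 : l₀⁻¹ * (l₀ * x * r⁻¹) * r' = x * (r⁻¹ * r') := by group
  rw [h3] at h2
  exact h1.trans h2

lemma Lgood_conj {l γ : G} (hl : l ∈ L) (hγ : Lgood L R γ) (hr₀ : ∃ r₀, r₀ ∈ R) :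
    Lgood L R (l * γ * l⁻¹) := by
  obtain ⟨r₀, hr₀⟩ := hr₀
  intro x
  have h1 : WeakConn L R x (l⁻¹ * x * r₀) := wc_arc hl hr₀
  have h2 := hγ (l⁻¹ * x * r₀)
  have h3 : WeakConn L R (γ * (l⁻¹ * x * r₀)) (l * (γ * (l⁻¹ * x * r₀)) * r₀⁻¹) :=
    wc_back hl hr₀
  have h4 : l * (γ * (l⁻¹ * x * r₀)) * r₀⁻¹ = (l * γ * l⁻¹) * x := by group
  rw [h4] at h3
  exact (h1.trans h2).trans h3

lemma Lgood_conj_inv {l γ : G} (hl : l ∈ L) (hγ : Lgood L R γ) (hr₀ : ∃ r₀, r₀ ∈ R) :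
    Lgood L R (l⁻¹ * γ * l) := by
  obtain ⟨r₀, hr₀⟩ := hr₀
  intro x
  have h1 : WeakConn L R x (l * x * r₀⁻¹) := wc_back hl hr₀
  have h2 := hγ (l * x * r₀⁻¹)
  have h3 : WeakConn L R (γ * (l * x * r₀⁻¹)) (l⁻¹ * (γ * (l * x * r₀⁻¹)) * r₀) :=
    wc_arc hl hr₀
  have h4 : l⁻¹ * (γ * (l * x * r₀⁻¹)) * r₀ = (l⁻¹ * γ * l) * x := by group
  rw [h4] at h3
  exact (h1.trans h2).trans h3

lemma Rgood_conj {r δ : G} (hr : r ∈ R) (hδ : Rgood L R δ) (hl₀ : ∃ l₀, l₀ ∈ L) :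
    Rgood L R (r⁻¹ * δ * r) := by
  obtain ⟨l₀, hl₀⟩ := hl₀
  intro x
  have h1 : WeakConn L R x (l₀ * x * r⁻¹) := wc_back hl₀ hr
  have h2 := hδ (l₀ * x * r⁻¹)
  have h3 : WeakConn L R (l₀ * x * r⁻¹ * δ) (l₀⁻¹ * (l₀ * x * r⁻¹ * δ) * r) :=
    wc_arc hl₀ hr
  have h4 : l₀⁻¹ * (l₀ * x * r⁻¹ * δ) * r = x * (r⁻¹ * δ * r) := by group
  rw [h4] at h3
  exact (h1.trans h2).trans h3

lemma Rgood_conj_inv {r δ : G} (hr : r ∈ R) (hδ : Rgood L R δ) (hl₀ : ∃ l₀, l₀ ∈ L) :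
    Rgood L R (r * δ * r⁻¹) := by
  obtain ⟨l₀, hl₀⟩ := hl₀
  intro x
  have h1 : WeakConn L R x (l₀⁻¹ * x * r) := wc_arc hl₀ hr
  have h2 := hδ (l₀⁻¹ * x * r)
  have h3 : WeakConn L R (l₀⁻¹ * x * r * δ) (l₀ * (l₀⁻¹ * x * r * δ) * r⁻¹) :=
    wc_back hl₀ hr
  have h4 : l₀ * (l₀⁻¹ * x * r * δ) * r⁻¹ = x * (r * δ * r⁻¹) := by group
  rw [h4] at h3
  exact (h1.trans h2).trans h3


lemma Lgood_conj_zpow {l₀ γ : G} (hl₀ : l₀ ∈ L) (hγ : Lgood L R γ) (hr₀ : ∃ r₀, r₀ ∈ R) :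
    ∀ n : ℤ, Lgood L R (l₀ ^ n * γ * l₀ ^ (-n)) := by
  intro n
  induction n using Int.induction_on with
  | zero => simpa using hγ
  | succ i ih =>
      have h := Lgood_conj hl₀ ih hr₀
      have e : l₀ ^ ((i : ℤ) + 1) * γ * l₀ ^ (-((i : ℤ) + 1)) =
          l₀ * (l₀ ^ (i : ℤ) * γ * l₀ ^ (-(i : ℤ))) * l₀⁻¹ := by group
      rw [e]; exact h
  | pred i ih =>
      have h := Lgood_conj_inv hl₀ ih hr₀
      have e : l₀ ^ (-(i : ℤ) - 1) * γ * l₀ ^ (-(-(i : ℤ) - 1)) =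
          l₀⁻¹ * (l₀ ^ (-(i : ℤ)) * γ * l₀ ^ (-(-(i : ℤ)))) * l₀ := by group
      rw [e]; exact h

lemma Rgood_conj_zpow {r₀ δ : G} (hr₀ : r₀ ∈ R) (hδ : Rgood L R δ) (hl₀ : ∃ l₀, l₀ ∈ L) :
    ∀ n : ℤ, Rgood L R (r₀ ^ n * δ * r₀ ^ (-n)) := by
  intro n
  induction n using Int.induction_on with
  | zero => simpa using hδ
  | succ i ih =>
      have h := Rgood_conj_inv hr₀ ih hl₀
      have e : r₀ ^ ((i : ℤ) + 1) * δ * r₀ ^ (-((i : ℤ) + 1)) =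
          r₀ * (r₀ ^ (i : ℤ) * δ * r₀ ^ (-(i : ℤ))) * r₀⁻¹ := by group
      rw [e]; exact h
  | pred i ih =>
      have h := Rgood_conj hr₀ ih hl₀
      have e : r₀ ^ (-(i : ℤ) - 1) * δ * r₀ ^ (-(-(i : ℤ) - 1)) =
          r₀⁻¹ * (r₀ ^ (-(i : ℤ)) * δ * r₀ ^ (-(-(i : ℤ)))) * r₀ := by group
      rw [e]; exact h

lemma Lshift {l₀ : G} (hl₀ : l₀ ∈ L) (hr : ∃ r₀, r₀ ∈ R) (n : ℤ) {x y : G}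
    (h : WeakConn L R x y) : WeakConn L R (l₀ ^ n * x) (l₀ ^ n * y) := by
  obtain ⟨r₀, hr₀⟩ := hr
  induction h with
  | refl => exact ReflTransGen.refl
  | @tail b c _ h2 ih =>
      refine ih.trans ?_
      rcases h2 with harc | harc
      · obtain ⟨l, hl, r, hrr, hc⟩ := harc
        have h1 : WeakConn L R (l₀ ^ n * b) (l₀⁻¹ * (l₀ ^ n * b) * r) := wc_arc hl₀ hrr
        have h2' := Lgood_conj_zpow hl₀ (Lgood_inv_mul hl hl₀ ⟨r₀, hr₀⟩) ⟨r₀, hr₀⟩ n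
            (l₀⁻¹ * (l₀ ^ n * b) * r)
        have e : (l₀ ^ n * (l⁻¹ * l₀) * l₀ ^ (-n)) * (l₀⁻¹ * (l₀ ^ n * b) * r) =
            l₀ ^ n * (l⁻¹ * b * r) := by group
        rw [e] at h2'
        rw [hc]
        exact h1.trans h2'
      · obtain ⟨l, hl, r, hrr, hb⟩ := harc
        have hc : c = l * b * r⁻¹ := by rw [hb]; group
        have h1 : WeakConn L R (l₀ ^ n * b) (l₀ * (l₀ ^ n * b) * r⁻¹) := wc_back hl₀ hrr
        have h2' := Lgood_conj_zpow hl₀ (Lgood_mul_inv hl hl₀ ⟨r₀, hr₀⟩) ⟨r₀, hr₀⟩ n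
            (l₀ * (l₀ ^ n * b) * r⁻¹)
        have e : (l₀ ^ n * (l * l₀⁻¹) * l₀ ^ (-n)) * (l₀ * (l₀ ^ n * b) * r⁻¹) =
            l₀ ^ n * (l * b * r⁻¹) := by group
        rw [e] at h2'
        rw [hc]
        exact h1.trans h2'

lemma Rshift {r₀ : G} (hr₀ : r₀ ∈ R) (hl : ∃ l₀, l₀ ∈ L) (n : ℤ) {x y : G}
    (h : WeakConn L R x y) : WeakConn L R (x * r₀ ^ n) (y * r₀ ^ n) := by
  obtain ⟨l₀, hl₀⟩ := hl
  induction h with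
  | refl => exact ReflTransGen.refl
  | @tail b c _ h2 ih =>
      refine ih.trans ?_
      rcases h2 with harc | harc
      · obtain ⟨l, hll, r, hrr, hc⟩ := harc
        have h1 : WeakConn L R (b * r₀ ^ n) (l⁻¹ * (b * r₀ ^ n) * r₀) := wc_arc hll hr₀
        have h2' := Rgood_conj_zpow hr₀ (Rgood_inv_mul hr₀ hrr ⟨l₀, hl₀⟩) ⟨l₀, hl₀⟩ (-n)
            (l⁻¹ * (b * r₀ ^ n) * r₀)
        have e : (l⁻¹ * (b * r₀ ^ n) * r₀) * (r₀ ^ (-n) * (r₀⁻¹ * r) * r₀ ^ (-(-n))) =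
            (l⁻¹ * b * r) * r₀ ^ n := by group
        rw [e] at h2'
        rw [hc]
        exact h1.trans h2'
      · obtain ⟨l, hll, r, hrr, hb⟩ := harc
        have hc : c = l * b * r⁻¹ := by rw [hb]; group
        have h1 : WeakConn L R (b * r₀ ^ n) (l * (b * r₀ ^ n) * r₀⁻¹) := wc_back hll hr₀
        have h2' := Rgood_conj_zpow hr₀ (Rgood_mul_inv hr₀ hrr ⟨l₀, hl₀⟩) ⟨l₀, hl₀⟩ (-n)
            (l * (b * r₀ ^ n) * r₀⁻¹)
        have e : (l * (b * r₀ ^ n) * r₀⁻¹) * (r₀ ^ (-n) * (r₀ * r⁻¹) * r₀ ^ (-(-n))) =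
            (l * b * r⁻¹) * r₀ ^ n := by group
        rw [e] at h2'
        rw [hc]
        exact h1.trans h2'


lemma diag {l₀ r₀ : G} (hl₀ : l₀ ∈ L) (hr₀ : r₀ ∈ R) (n : ℤ) (x : G) :
    WeakConn L R x (l₀ ^ (-n) * x * r₀ ^ n) := by
  induction n using Int.induction_on with
  | zero => simpa using wc_refl x
  | succ i ih =>
      refine ih.trans ?_
      have h := wc_arc (x := l₀ ^ (-(i:ℤ)) * x * r₀ ^ (i:ℤ)) hl₀ hr₀
      have e : l₀⁻¹ * (l₀ ^ (-(i:ℤ)) * x * r₀ ^ (i:ℤ)) * r₀ =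
          l₀ ^ (-((i:ℤ)+1)) * x * r₀ ^ ((i:ℤ)+1) := by group
      rw [e] at h
      exact h
  | pred i ih =>
      refine ih.trans ?_
      have h := wc_back (x := l₀ ^ (-(-(i:ℤ))) * x * r₀ ^ (-(i:ℤ))) hl₀ hr₀
      have e : l₀ * (l₀ ^ (-(-(i:ℤ))) * x * r₀ ^ (-(i:ℤ))) * r₀⁻¹ =
          l₀ ^ (-(-(i:ℤ)-1)) * x * r₀ ^ (-(i:ℤ)-1) := by group
      rw [e] at h
      exact h

lemma collapse {l₀ r₀ : G} (hl₀ : l₀ ∈ L) (hr₀ : r₀ ∈ R) (a b : ℤ) :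
    WeakConn L R (l₀ ^ a * r₀ ^ b) (l₀ ^ (a + b)) := by
  have h := diag hl₀ hr₀ (-b) (l₀ ^ a * r₀ ^ b)
  have e : l₀ ^ (-(-b)) * (l₀ ^ a * r₀ ^ b) * r₀ ^ (-b) = l₀ ^ (a + b) := by group
  rw [e] at h
  exact h

lemma lnormL {l₀ c : G} (hl₀ : l₀ ∈ L) (hc : c ∈ L) (hr : ∃ r₀, r₀ ∈ R) (x : G) :
    WeakConn L R (c * x) (l₀ ^ (1:ℤ) * x) := by
  have h := Lgood_mul_inv hc hl₀ hr (l₀ ^ (1:ℤ) * x)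
  have e : (c * l₀⁻¹) * (l₀ ^ (1:ℤ) * x) = c * x := by group
  rw [e] at h
  exact wc_symm h

lemma lnormLinv {l₀ c : G} (hl₀ : l₀ ∈ L) (hc : c ∈ L⁻¹) (hr : ∃ r₀, r₀ ∈ R) (x : G) :
    WeakConn L R (c * x) (l₀ ^ (-1:ℤ) * x) := by
  have hc' : c⁻¹ ∈ L := Set.mem_inv.mp hc
  have h := Lgood_inv_mul hc' hl₀ hr (l₀ ^ (-1:ℤ) * x)
  have e : ((c⁻¹)⁻¹ * l₀) * (l₀ ^ (-1:ℤ) * x) = c * x := by group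
  rw [e] at h
  exact wc_symm h

lemma rnormR {r₀ c : G} (hr₀ : r₀ ∈ R) (hc : c ∈ R) (hl : ∃ l₀, l₀ ∈ L) (x : G) :
    WeakConn L R (x * c) (x * r₀ ^ (1:ℤ)) := by
  have h := Rgood_inv_mul hr₀ hc hl (x * r₀ ^ (1:ℤ))
  have e : (x * r₀ ^ (1:ℤ)) * (r₀⁻¹ * c) = x * c := by group
  rw [e] at h
  exact wc_symm h

lemma rnormRinv {r₀ c : G} (hr₀ : r₀ ∈ R) (hc : c ∈ R⁻¹) (hl : ∃ l₀, l₀ ∈ L) (x : G) :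
    WeakConn L R (x * c) (x * r₀ ^ (-1:ℤ)) := by
  have hc' : c⁻¹ ∈ R := Set.mem_inv.mp hc
  have h := Rgood_mul_inv hr₀ hc' hl (x * r₀ ^ (-1:ℤ))
  have e : (x * r₀ ^ (-1:ℤ)) * (r₀ * (c⁻¹)⁻¹) = x * c := by group
  rw [e] at h
  exact wc_symm h

lemma listL {l₀ : G} (hl₀ : l₀ ∈ L) (hr : ∃ r₀, r₀ ∈ R) (f : G → ℤ) :
    ∀ lst : List G, (∀ c ∈ lst, ∀ x : G, WeakConn L R (c * x) (l₀ ^ f c * x)) →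
      ∀ x : G, WeakConn L R (lst.prod * x) (l₀ ^ (lst.map f).sum * x) := by
  intro lst
  induction lst with
  | nil => intro _ x; simpa using wc_refl x
  | cons c t ih =>
      intro h x
      have h1 : WeakConn L R (c * (t.prod * x)) (l₀ ^ f c * (t.prod * x)) :=
        h c List.mem_cons_self (t.prod * x)
      have h2 : WeakConn L R (t.prod * x) (l₀ ^ (t.map f).sum * x) :=
        ih (fun c hc => h c (List.mem_cons_of_mem _ hc)) x
      have h3 := Lshift hl₀ hr (f c) h2
      have e1 : (c :: t).prod * x = c * (t.prod * x) := by
        rw [List.prod_cons]; group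
      have e2 : l₀ ^ f c * (l₀ ^ (t.map f).sum * x) = l₀ ^ ((c :: t).map f).sum * x := by
        rw [List.map_cons, List.sum_cons, ← mul_assoc, ← zpow_add]
      rw [e1, ← e2]
      exact h1.trans h3

lemma listR {r₀ : G} (hr₀ : r₀ ∈ R) (hl : ∃ l₀, l₀ ∈ L) (f : G → ℤ) :
    ∀ lst : List G, (∀ c ∈ lst, ∀ x : G, WeakConn L R (x * c) (x * r₀ ^ f c)) →
      ∀ x : G, WeakConn L R (x * lst.prod) (x * r₀ ^ (lst.map f).sum) := by
  intro lst
  induction lst with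
  | nil => intro _ x; simpa using wc_refl x
  | cons c t ih =>
      intro h x
      have h2 : WeakConn L R ((x * c) * t.prod) ((x * c) * r₀ ^ (t.map f).sum) :=
        ih (fun c hc => h c (List.mem_cons_of_mem _ hc)) (x * c)
      have h1 : WeakConn L R (x * c) (x * r₀ ^ f c) := h c List.mem_cons_self x
      have h3 := Rshift hr₀ hl ((t.map f).sum) h1
      have e1 : x * (c :: t).prod = (x * c) * t.prod := by
        rw [List.prod_cons]; group
      have e2 : (x * r₀ ^ f c) * r₀ ^ (t.map f).sum = x * r₀ ^ ((c :: t).map f).sum := by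
        rw [List.map_cons, List.sum_cons, mul_assoc, ← zpow_add]
      rw [e1, ← e2]
      exact h2.trans h3


lemma pointnorm {l₀ r₀ : G} (hl₀ : l₀ ∈ L) (hr₀ : r₀ ∈ R)
    (hG : WordSet (L ∪ L⁻¹) * WordSet (R ∪ R⁻¹) = Set.univ) (x : G) :
    ∃ p : ℤ, WeakConn L R x (l₀ ^ p) := by
  classical
  have hx : x ∈ WordSet (L ∪ L⁻¹) * WordSet (R ∪ R⁻¹) := by rw [hG]; trivial
  rw [Set.mem_mul] at hx
  obtain ⟨w₁, hw₁, w₂, hw₂, hxeq⟩ := hx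
  obtain ⟨n₁, hn₁, lst₁, hlen₁, hmem₁, hprod₁⟩ := hw₁
  obtain ⟨n₂, hn₂, lst₂, hlen₂, hmem₂, hprod₂⟩ := hw₂
  set fL : G → ℤ := fun c => if c ∈ L then 1 else -1 with hfL
  set fR : G → ℤ := fun c => if c ∈ R then 1 else -1 with hfR
  have hL1 : ∀ c ∈ lst₁, ∀ y : G, WeakConn L R (c * y) (l₀ ^ fL c * y) := by
    intro c hc y
    by_cases hcL : c ∈ L
    · simp only [hfL]; rw [if_pos hcL]; exact lnormL hl₀ hcL ⟨r₀, hr₀⟩ y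
    · have h : c ∈ L⁻¹ := (hmem₁ c hc).resolve_left hcL
      simp only [hfL]; rw [if_neg hcL]; exact lnormLinv hl₀ h ⟨r₀, hr₀⟩ y
  have hR1 : ∀ c ∈ lst₂, ∀ y : G, WeakConn L R (y * c) (y * r₀ ^ fR c) := by
    intro c hc y
    by_cases hcR : c ∈ R
    · simp only [hfR]; rw [if_pos hcR]; exact rnormR hr₀ hcR ⟨l₀, hl₀⟩ y
    · have h : c ∈ R⁻¹ := (hmem₂ c hc).resolve_left hcR
      simp only [hfR]; rw [if_neg hcR]; exact rnormRinv hr₀ h ⟨l₀, hl₀⟩ y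
  have h1 := listL hl₀ ⟨r₀, hr₀⟩ fL lst₁ hL1 lst₂.prod
  have h2 := listR hr₀ ⟨l₀, hl₀⟩ fR lst₂ hR1 (l₀ ^ (lst₁.map fL).sum)
  have h3 := collapse hl₀ hr₀ (lst₁.map fL).sum (lst₂.map fR).sum
  refine ⟨(lst₁.map fL).sum + (lst₂.map fR).sum, ?_⟩
  have hx' : x = lst₁.prod * lst₂.prod := by rw [hprod₁, hprod₂, hxeq]
  rw [hx']
  exact (h1.trans h2).trans h3

def D0 (L R : Set G) (l₀ : G) (hl₀ : l₀ ∈ L) (hr : ∃ r₀, r₀ ∈ R) : AddSubgroup ℤ where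
  carrier := {m : ℤ | WeakConn L R (l₀ ^ m) 1}
  zero_mem' := by simpa using wc_refl (1 : G)
  add_mem' := by
    intro a b ha hb
    have h := Lshift hl₀ hr b ha
    have e1 : l₀ ^ b * l₀ ^ a = l₀ ^ (a + b) := by rw [← zpow_add, add_comm]
    rw [e1, mul_one] at h
    exact h.trans hb
  neg_mem' := by
    intro a ha
    have h := Lshift hl₀ hr (-a) ha
    have e1 : l₀ ^ (-a) * l₀ ^ a = (1:G) := by group
    rw [e1, mul_one] at h
    exact wc_symm h

lemma mem_D0 {l₀ : G} {hl₀ : l₀ ∈ L} {hr : ∃ r₀, r₀ ∈ R} {m : ℤ} :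
    m ∈ D0 L R l₀ hl₀ hr ↔ WeakConn L R (l₀ ^ m) 1 := Iff.rfl

lemma kdvd {l₀ : G} (hl₀ : l₀ ∈ L) (hr : ∃ r₀, r₀ ∈ R) (k : ℕ)
    (hk : IsLeast {n : ℕ | 0 < n ∧ WeakConn L R (l₀ ^ (n:ℤ)) 1} k) (m : ℤ) :
    WeakConn L R (l₀ ^ m) 1 ↔ (k:ℤ) ∣ m := by
  have hk0 : 0 < k := hk.1.1
  have hkne : ((k:ℤ)) ≠ 0 := Int.natCast_ne_zero.mpr hk0.ne'
  have hkD : ((k:ℤ)) ∈ D0 L R l₀ hl₀ hr := hk.1.2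
  constructor
  · intro hm
    have hmD : m ∈ D0 L R l₀ hl₀ hr := hm
    have hmod : m % (k:ℤ) ∈ D0 L R l₀ hl₀ hr := by
      rw [Int.emod_def m (k:ℤ)]
      refine AddSubgroup.sub_mem _ hmD ?_
      simpa [smul_eq_mul, mul_comm] using AddSubgroup.zsmul_mem _ hkD (m / (k:ℤ))
    by_contra hdvd
    have hne : m % (k:ℤ) ≠ 0 := fun h0 => hdvd (Int.dvd_of_emod_eq_zero h0)
    have hnonneg : 0 ≤ m % (k:ℤ) := Int.emod_nonneg m hkne
    have hlt : m % (k:ℤ) < (k:ℤ) := Int.emod_lt_of_pos m (by exact_mod_cast hk0)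
    have hcast : (((m % (k:ℤ)).toNat : ℤ)) = m % (k:ℤ) := Int.toNat_of_nonneg hnonneg
    have hnpos : 0 < (m % (k:ℤ)).toNat := by omega
    have hle : k ≤ (m % (k:ℤ)).toNat := hk.2 ⟨hnpos, by rw [hcast]; exact hmod⟩
    omega
  · rintro ⟨c, rfl⟩
    have h := AddSubgroup.zsmul_mem _ hkD c
    simpa [smul_eq_mul, mul_comm, mem_D0] using h


lemma pureL {l₀ : G} (hl₀ : l₀ ∈ L) (hr : ∃ r₀, r₀ ∈ R) {n : ℕ} {w : G}
    (hw : IsWord L n w) : WeakConn L R w (l₀ ^ (n:ℤ)) := by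
  obtain ⟨lst, hlen, hmem, hprod⟩ := hw
  have h := listL hl₀ hr (fun _ => (1:ℤ)) lst (fun c hc y => lnormL hl₀ (hmem c hc) hr y) 1
  have hsum : (lst.map fun _ => (1:ℤ)).sum = (n:ℤ) := by
    simp [hlen]
  rw [mul_one, mul_one, hprod, hsum] at h
  exact h

lemma pureLinv {l₀ : G} (hl₀ : l₀ ∈ L) (hr : ∃ r₀, r₀ ∈ R) {n : ℕ} {w : G}
    (hw : IsWord L⁻¹ n w) : WeakConn L R w (l₀ ^ (-(n:ℤ))) := by
  obtain ⟨lst, hlen, hmem, hprod⟩ := hw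
  have h := listL hl₀ hr (fun _ => (-1:ℤ)) lst (fun c hc y => lnormLinv hl₀ (hmem c hc) hr y) 1
  have hsum : (lst.map fun _ => (-1:ℤ)).sum = -(n:ℤ) := by
    simp [hlen]
  rw [mul_one, mul_one, hprod, hsum] at h
  exact h

lemma pureR {l₀ r₀ : G} (hl₀ : l₀ ∈ L) (hr₀ : r₀ ∈ R) {n : ℕ} {w : G}
    (hw : IsWord R n w) : WeakConn L R w (l₀ ^ (n:ℤ)) := by
  obtain ⟨lst, hlen, hmem, hprod⟩ := hw
  have h := listR hr₀ ⟨l₀, hl₀⟩ (fun _ => (1:ℤ)) lst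
    (fun c hc y => rnormR hr₀ (hmem c hc) ⟨l₀, hl₀⟩ y) 1
  have hsum : (lst.map fun _ => (1:ℤ)).sum = (n:ℤ) := by
    simp [hlen]
  rw [one_mul, one_mul, hprod, hsum] at h
  have h2 := collapse hl₀ hr₀ 0 (n:ℤ)
  rw [zpow_zero, one_mul, zero_add] at h2
  exact h.trans h2

lemma pureRinv {l₀ r₀ : G} (hl₀ : l₀ ∈ L) (hr₀ : r₀ ∈ R) {n : ℕ} {w : G}
    (hw : IsWord R⁻¹ n w) : WeakConn L R w (l₀ ^ (-(n:ℤ))) := by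
  obtain ⟨lst, hlen, hmem, hprod⟩ := hw
  have h := listR hr₀ ⟨l₀, hl₀⟩ (fun _ => (-1:ℤ)) lst
    (fun c hc y => rnormRinv hr₀ (hmem c hc) ⟨l₀, hl₀⟩ y) 1
  have hsum : (lst.map fun _ => (-1:ℤ)).sum = -(n:ℤ) := by
    simp [hlen]
  rw [one_mul, one_mul, hprod, hsum] at h
  have h2 := collapse hl₀ hr₀ 0 (-(n:ℤ))
  rw [zpow_zero, one_mul, zero_add] at h2
  exact h.trans h2

lemma least_translate {l₀ r₀ : G} (hl₀ : l₀ ∈ L) (hr₀ : r₀ ∈ R) (k : ℕ)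
    (hk : IsLeast {n : ℕ | 0 < n ∧ ∃ w : G,
        (IsWord L n w ∨ IsWord L⁻¹ n w ∨ IsWord R n w ∨ IsWord R⁻¹ n w) ∧
        WeakConn L R w 1} k) :
    IsLeast {n : ℕ | 0 < n ∧ WeakConn L R (l₀ ^ (n:ℤ)) 1} k := by
  have hrex : ∃ r₀, r₀ ∈ R := ⟨r₀, hr₀⟩
  have hset : {n : ℕ | 0 < n ∧ ∃ w : G,
      (IsWord L n w ∨ IsWord L⁻¹ n w ∨ IsWord R n w ∨ IsWord R⁻¹ n w) ∧
      WeakConn L R w 1} = {n : ℕ | 0 < n ∧ WeakConn L R (l₀ ^ (n:ℤ)) 1} := by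
    ext n
    simp only [Set.mem_setOf_eq]
    constructor
    · rintro ⟨hn, w, hcase, hw1⟩
      refine ⟨hn, ?_⟩
      have hneg : WeakConn L R (l₀ ^ (-(n:ℤ))) 1 → WeakConn L R (l₀ ^ (n:ℤ)) 1 := by
        intro h
        have h2 := AddSubgroup.neg_mem (D0 L R l₀ hl₀ hrex) (mem_D0.mpr h)
        rw [neg_neg] at h2
        exact h2
      rcases hcase with h | h | h | h
      · exact (wc_symm (pureL hl₀ hrex h)).trans hw1
      · exact hneg ((wc_symm (pureLinv hl₀ hrex h)).trans hw1)
      · exact (wc_symm (pureR hl₀ hr₀ h)).trans hw1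
      · exact hneg ((wc_symm (pureRinv hl₀ hr₀ h)).trans hw1)
    · rintro ⟨hn, h⟩
      refine ⟨hn, l₀ ^ (n:ℤ), Or.inl ⟨List.replicate n l₀, List.length_replicate, ?_, ?_⟩, h⟩
      · intro x hx
        rw [List.eq_of_mem_replicate hx]
        exact hl₀
      · rw [List.prod_replicate]
        exact (zpow_natCast l₀ n).symm
  rw [hset] at hk
  exact hk

end Aux

theorem stmt_8 {G : Type*} [Group G] (L R : Set G) (hL : L.Nonempty) (hR : R.Nonempty)
    (hG : WordSet (L ∪ L⁻¹) * WordSet (R ∪ R⁻¹) = Set.univ)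
    (k : ℕ)
    (hk : IsLeast {n : ℕ | 0 < n ∧ ∃ w : G,
        (IsWord L n w ∨ IsWord L⁻¹ n w ∨ IsWord R n w ∨ IsWord R⁻¹ n w) ∧
        WeakConn L R w 1} k) :
    Nonempty ({C : Set G | ∃ g : G, C = {h | WeakConn L R g h}} ≃ Fin k) ∧
    ∀ C ∈ {C : Set G | ∃ g : G, C = {h | WeakConn L R g h}},
      ∀ D ∈ {C : Set G | ∃ g : G, C = {h | WeakConn L R g h}},
        Nonempty (C ≃ D) := by
  obtain ⟨l₀, hl₀⟩ := hL
  obtain ⟨r₀, hr₀⟩ := hR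
  have hrex : ∃ r₀, r₀ ∈ R := ⟨r₀, hr₀⟩
  have hk' : IsLeast {n : ℕ | 0 < n ∧ WeakConn L R (l₀ ^ (n:ℤ)) 1} k :=
    least_translate hl₀ hr₀ k hk
  have hdvd : ∀ m : ℤ, WeakConn L R (l₀ ^ m) 1 ↔ (k:ℤ) ∣ m := kdvd hl₀ hrex k hk'
  have hk0 : 0 < k := hk'.1.1
  have hsep : ∀ p q : ℤ, WeakConn L R (l₀ ^ p) (l₀ ^ q) ↔ (k:ℤ) ∣ (p - q) := by
    intro p q
    constructor
    · intro h
      have h2 := Lshift hl₀ hrex (-q) h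
      have e1 : l₀ ^ (-q) * l₀ ^ p = l₀ ^ (p - q) := by group
      have e2 : l₀ ^ (-q) * l₀ ^ q = (1:G) := by group
      rw [e1, e2] at h2
      exact (hdvd _).mp h2
    · intro h
      have h2 := Lshift hl₀ hrex q ((hdvd _).mpr h)
      have e1 : l₀ ^ q * l₀ ^ (p - q) = l₀ ^ p := by group
      rw [e1, mul_one] at h2
      exact h2
  constructor
  · refine ⟨(Equiv.ofBijective (fun i : Fin k =>
      (⟨{h | WeakConn L R (l₀ ^ (i.1:ℤ)) h}, ⟨l₀ ^ (i.1:ℤ), rfl⟩⟩ :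
        {C : Set G | ∃ g : G, C = {h | WeakConn L R g h}})) ⟨?_, ?_⟩).symm⟩
    · intro i j hij
      have hsets : {h | WeakConn L R (l₀ ^ (i.1:ℤ)) h} = {h | WeakConn L R (l₀ ^ (j.1:ℤ)) h} :=
        congrArg Subtype.val hij
      have hmem : (l₀ ^ (j.1:ℤ)) ∈ {h | WeakConn L R (l₀ ^ (i.1:ℤ)) h} := by
        rw [hsets]
        exact wc_refl _
      have hd : (k:ℤ) ∣ ((i.1:ℤ) - (j.1:ℤ)) := (hsep _ _).mp hmem
      have hz : ((i.1:ℤ) - (j.1:ℤ)) = 0 := by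
        refine Int.eq_zero_of_abs_lt_dvd hd ?_
        have hi := i.2
        have hj := j.2
        rw [abs_lt]
        omega
      have : i.1 = j.1 := by omega
      exact Fin.ext this
    · rintro ⟨C, g, rfl⟩
      obtain ⟨p, hp⟩ := pointnorm hl₀ hr₀ hG g
      have hnonneg : 0 ≤ p % (k:ℤ) := Int.emod_nonneg p (Int.natCast_ne_zero.mpr hk0.ne')
      have hlt : p % (k:ℤ) < (k:ℤ) := Int.emod_lt_of_pos p (by exact_mod_cast hk0)
      have hcast : (((p % (k:ℤ)).toNat : ℤ)) = p % (k:ℤ) := Int.toNat_of_nonneg hnonneg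
      refine ⟨⟨(p % (k:ℤ)).toNat, by omega⟩, ?_⟩
      apply Subtype.ext
      simp only
      have hgp : WeakConn L R g (l₀ ^ (((p % (k:ℤ)).toNat : ℤ))) := by
        rw [hcast]
        refine hp.trans ((hsep p (p % (k:ℤ))).mpr ?_)
        have e : p - p % (k:ℤ) = (k:ℤ) * (p / (k:ℤ)) := by
          rw [Int.emod_def]; ring
        rw [e]
        exact Dvd.intro _ rfl
      ext h
      constructor
      · intro hh
        exact (hgp.trans hh : WeakConn L R g h)
      · intro hh
        exact ((wc_symm hgp).trans hh : WeakConn L R _ h)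
  · rintro C ⟨g, rfl⟩ D ⟨g', rfl⟩
    obtain ⟨p, hp⟩ := pointnorm hl₀ hr₀ hG g
    obtain ⟨p', hp'⟩ := pointnorm hl₀ hr₀ hG g'
    have fwd : ∀ h : G, WeakConn L R g h → WeakConn L R g' (l₀ ^ (p' - p) * h) := by
      intro h hh
      have h1 : WeakConn L R (l₀ ^ p') (l₀ ^ (p' - p) * g) := by
        have h2 := Lshift hl₀ hrex (p' - p) (wc_symm hp)
        have e : l₀ ^ (p' - p) * l₀ ^ p = l₀ ^ p' := by group
        rw [e] at h2
        exact h2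
      exact (hp'.trans h1).trans (Lshift hl₀ hrex (p' - p) hh)
    have bwd : ∀ h : G, WeakConn L R g' h → WeakConn L R g (l₀ ^ (p - p') * h) := by
      intro h hh
      have h1 : WeakConn L R (l₀ ^ p) (l₀ ^ (p - p') * g') := by
        have h2 := Lshift hl₀ hrex (p - p') (wc_symm hp')
        have e : l₀ ^ (p - p') * l₀ ^ p' = l₀ ^ p := by group
        rw [e] at h2
        exact h2
      exact (hp.trans h1).trans (Lshift hl₀ hrex (p - p') hh)
    refine ⟨⟨fun x => ⟨l₀ ^ (p' - p) * x.1, fwd x.1 x.2⟩,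
             fun x => ⟨l₀ ^ (p - p') * x.1, bwd x.1 x.2⟩, fun x => ?_, fun x => ?_⟩⟩
    · exact Subtype.ext (by group)
    · exact Subtype.ext (by group)
end

section
/- The two-sided group digraph 2S(G;L,R) is weakly connected if and only if G = W(L∪L⁻¹)·W(R∪R⁻¹) and there exists some element of L ∪ L⁻¹ or of R ∪ R⁻¹ that is weakly connected to the identity e. -/
open Relation Pointwise

namespace Aux

variable {G : Type*} [Group G] {L R : Set G} {l₀ r₀ : G}

def Hc (L R : Set G) : Subgroup (G × G) := Subgroup.closure (L ×ˢ R)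

lemma gen_mem {l r : G} (hl : l ∈ L) (hr : r ∈ R) : (l, r) ∈ Hc L R :=
  Subgroup.subset_closure (Set.mk_mem_prod hl hr)

lemma weakConn_symm {a b : G} (h : WeakConn L R a b) : WeakConn L R b a :=
  (@Relation.ReflTransGen.stdSymm _ _ ⟨fun _ _ hab => hab.symm⟩).symm _ _ h

lemma step_all {pq : G × G} (h : pq ∈ Hc L R) :
    ∀ g : G, WeakConn L R g (pq.1⁻¹ * g * pq.2) := by
  induction h using Subgroup.closure_induction with
  | mem x hx =>
      intro g
      exact ReflTransGen.single (Or.inl ⟨x.1, hx.1, x.2, hx.2, rfl⟩)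
  | one => intro g; have h0 : WeakConn L R g g := ReflTransGen.refl; simpa using h0
  | mul x y hx hy ihx ihy =>
      intro g
      have h1 := (ihx g).trans (ihy (x.1⁻¹ * g * x.2))
      have e : (x * y).1⁻¹ * g * (x * y).2 = y.1⁻¹ * (x.1⁻¹ * g * x.2) * y.2 := by
        simp [mul_assoc]
      rw [e]; exact h1
  | inv x hx ih =>
      intro g
      have h1 := ih (x.1 * g * x.2⁻¹)
      have e : x.1⁻¹ * (x.1 * g * x.2⁻¹) * x.2 = g := by group
      rw [e] at h1
      have e2 : (x⁻¹).1⁻¹ * g * (x⁻¹).2 = x.1 * g * x.2⁻¹ := by simp [mul_assoc]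
      rw [e2]; exact weakConn_symm h1

lemma weakConn_iff {g h : G} :
    WeakConn L R g h ↔ ∃ p q : G, (p, q) ∈ Hc L R ∧ h = p⁻¹ * g * q := by
  constructor
  · intro hconn
    induction hconn with
    | refl => exact ⟨1, 1, one_mem _, by simp⟩
    | @tail b c _ hstep ih =>
      obtain ⟨p, q, hpq, hb⟩ := ih
      rcases hstep with harc | harc
      · obtain ⟨l, hl, r, hr, rfl⟩ := harc
        exact ⟨p * l, q * r, mul_mem hpq (gen_mem hl hr), by rw [hb]; group⟩
      · obtain ⟨l, hl, r, hr, heq⟩ := harc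
        refine ⟨p * l⁻¹, q * r⁻¹, mul_mem hpq (inv_mem (gen_mem hl hr)), ?_⟩
        rw [hb] at heq
        have hc : c = l * (p⁻¹ * g * q) * r⁻¹ := by rw [heq]; group
        rw [hc]; group
  · rintro ⟨p, q, hpq, rfl⟩
    exact step_all hpq g

lemma memL {p q : G} (h : (p, q) ∈ Hc L R) :
    p ∈ Subgroup.closure L ∧ q ∈ Subgroup.closure R := by
  have hle : Hc L R ≤ (Subgroup.closure L).prod (Subgroup.closure R) := by
    rw [Hc, Subgroup.closure_le]
    rintro ⟨a, b⟩ ⟨ha, hb⟩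
    exact ⟨Subgroup.subset_closure ha, Subgroup.subset_closure hb⟩
  exact hle h

lemma pair_left (hr₀ : r₀ ∈ R) : ∀ u ∈ Subgroup.closure L, ∃ s : G, (u, s) ∈ Hc L R := by
  intro u hu
  induction hu using Subgroup.closure_induction with
  | mem x hx => exact ⟨r₀, gen_mem hx hr₀⟩
  | one => exact ⟨1, one_mem _⟩
  | mul x y hx hy ihx ihy =>
      obtain ⟨s, hs⟩ := ihx; obtain ⟨t, ht⟩ := ihy
      exact ⟨s * t, mul_mem hs ht⟩
  | inv x hx ih =>
      obtain ⟨s, hs⟩ := ih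
      exact ⟨s⁻¹, by simpa using inv_mem hs⟩

end Aux

namespace Aux2
variable {G : Type*} [Group G] {L R : Set G} {l₀ r₀ : G}
open Aux

lemma mulL {a b : G} (ha : (a, (1:G)) ∈ Hc L R) (hb : (b, (1:G)) ∈ Hc L R) :
    (a * b, (1:G)) ∈ Hc L R := by
  have h := mul_mem ha hb
  have e : ((a,(1:G)) * (b,(1:G)) : G × G) = (a * b, (1:G)) := by
    simp [Prod.ext_iff]
  rwa [e] at h

lemma invL {a : G} (ha : (a, (1:G)) ∈ Hc L R) : (a⁻¹, (1:G)) ∈ Hc L R := by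
  have h := inv_mem ha
  have e : ((a,(1:G)) : G × G)⁻¹ = (a⁻¹, (1:G)) := by simp [Prod.ext_iff]
  rwa [e] at h

lemma mulR {a b : G} (ha : ((1:G), a) ∈ Hc L R) (hb : ((1:G), b) ∈ Hc L R) :
    ((1:G), a * b) ∈ Hc L R := by
  have h := mul_mem ha hb
  have e : (((1:G),a) * ((1:G),b) : G × G) = ((1:G), a * b) := by
    simp [Prod.ext_iff]
  rwa [e] at h

lemma invR {a : G} (ha : ((1:G), a) ∈ Hc L R) : ((1:G), a⁻¹) ∈ Hc L R := by
  have h := inv_mem ha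
  have e : (((1:G),a) : G × G)⁻¹ = ((1:G), a⁻¹) := by simp [Prod.ext_iff]
  rwa [e] at h

lemma pair_right (hl₀ : l₀ ∈ L) : ∀ v ∈ Subgroup.closure R, ∃ t : G, (t, v) ∈ Hc L R := by
  intro v hv
  induction hv using Subgroup.closure_induction with
  | mem x hx => exact ⟨l₀, gen_mem hl₀ hx⟩
  | one => exact ⟨1, one_mem _⟩
  | mul x y hx hy ihx ihy =>
      obtain ⟨s, hs⟩ := ihx; obtain ⟨t, ht⟩ := ihy
      exact ⟨s * t, mul_mem hs ht⟩
  | inv x hx ih =>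
      obtain ⟨s, hs⟩ := ih
      exact ⟨s⁻¹, by simpa using inv_mem hs⟩

lemma conjL (hr₀ : r₀ ∈ R) {n u : G} (hn : (n, (1:G)) ∈ Hc L R)
    (hu : u ∈ Subgroup.closure L) : (u * n * u⁻¹, (1:G)) ∈ Hc L R := by
  obtain ⟨s, hs⟩ := pair_left hr₀ u hu
  have h := mul_mem (mul_mem hs hn) (inv_mem hs)
  have e : ((u,s) * (n,(1:G)) * ((u,s) : G × G)⁻¹) = (u * n * u⁻¹, (1:G)) := by
    simp [Prod.ext_iff]
  rwa [e] at h

lemma conjR (hl₀ : l₀ ∈ L) {n v : G} (hn : ((1:G), n) ∈ Hc L R)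
    (hv : v ∈ Subgroup.closure R) : ((1:G), v * n * v⁻¹) ∈ Hc L R := by
  obtain ⟨t, ht⟩ := pair_right hl₀ v hv
  have h := mul_mem (mul_mem ht hn) (inv_mem ht)
  have e : ((t,v) * ((1:G),n) * ((t,v) : G × G)⁻¹) = ((1:G), v * n * v⁻¹) := by
    simp [Prod.ext_iff]
  rwa [e] at h

lemma fst_mul_inv {a b c : G} (h1 : (a, c) ∈ Hc L R) (h2 : (b, c) ∈ Hc L R) :
    (a * b⁻¹, (1:G)) ∈ Hc L R := by
  have h := mul_mem h1 (inv_mem h2)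
  have e : ((a,c) * ((b,c) : G × G)⁻¹) = (a * b⁻¹, (1:G)) := by simp [Prod.ext_iff]
  rwa [e] at h

lemma fst_inv_mul {a b c : G} (h1 : (a, c) ∈ Hc L R) (h2 : (b, c) ∈ Hc L R) :
    (a⁻¹ * b, (1:G)) ∈ Hc L R := by
  have h := mul_mem (inv_mem h1) h2
  have e : (((a,c) : G × G)⁻¹ * (b,c)) = (a⁻¹ * b, (1:G)) := by simp [Prod.ext_iff]
  rwa [e] at h

lemma snd_mul_inv {a b c : G} (h1 : (c, a) ∈ Hc L R) (h2 : (c, b) ∈ Hc L R) :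
    ((1:G), a * b⁻¹) ∈ Hc L R := by
  have h := mul_mem h1 (inv_mem h2)
  have e : ((c,a) * ((c,b) : G × G)⁻¹) = ((1:G), a * b⁻¹) := by simp [Prod.ext_iff]
  rwa [e] at h

lemma snd_inv_mul {a b c : G} (h1 : (c, a) ∈ Hc L R) (h2 : (c, b) ∈ Hc L R) :
    ((1:G), a⁻¹ * b) ∈ Hc L R := by
  have h := mul_mem (inv_mem h1) h2
  have e : (((c,a) : G × G)⁻¹ * (c,b)) = ((1:G), a⁻¹ * b) := by simp [Prod.ext_iff]
  rwa [e] at h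

lemma diag (hl₀ : l₀ ∈ L) (hr₀ : r₀ ∈ R) (m : ℤ) : (l₀ ^ m, r₀ ^ m) ∈ Hc L R := by
  have h := zpow_mem (gen_mem hl₀ hr₀) m
  have e : (((l₀, r₀) : G × G)) ^ m = (l₀ ^ m, r₀ ^ m) := by
    ext <;> simp
  rwa [e] at h

lemma cosetL (hl₀ : l₀ ∈ L) (hr₀ : r₀ ∈ R) :
    ∀ u ∈ Subgroup.closure L, ∃ n : G, ∃ j : ℤ, (n, (1:G)) ∈ Hc L R ∧ u = n * l₀ ^ j := by
  intro u hu
  induction hu using Subgroup.closure_induction with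
  | mem x hx =>
      exact ⟨x * l₀⁻¹, 1, fst_mul_inv (gen_mem hx hr₀) (gen_mem hl₀ hr₀), by group⟩
  | one => exact ⟨1, 0, one_mem _, by simp⟩
  | mul x y hx hy ihx ihy =>
      obtain ⟨n, j, hn, rfl⟩ := ihx
      obtain ⟨n', j', hn', rfl⟩ := ihy
      exact ⟨n * (l₀ ^ j * n' * (l₀ ^ j)⁻¹), j + j',
        mulL hn (conjL hr₀ hn' (zpow_mem (Subgroup.subset_closure hl₀) j)), by group⟩
  | inv x hx ih =>
      obtain ⟨n, j, hn, rfl⟩ := ih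
      exact ⟨(l₀ ^ j)⁻¹ * n⁻¹ * ((l₀ ^ j)⁻¹)⁻¹, -j,
        conjL hr₀ (invL hn) (inv_mem (zpow_mem (Subgroup.subset_closure hl₀) j)), by group⟩

lemma cosetR (hl₀ : l₀ ∈ L) (hr₀ : r₀ ∈ R) :
    ∀ v ∈ Subgroup.closure R, ∃ n : G, ∃ k : ℤ, ((1:G), n) ∈ Hc L R ∧ v = n * r₀ ^ k := by
  intro v hv
  induction hv using Subgroup.closure_induction with
  | mem x hx =>
      exact ⟨x * r₀⁻¹, 1, snd_mul_inv (gen_mem hl₀ hx) (gen_mem hl₀ hr₀), by group⟩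
  | one => exact ⟨1, 0, one_mem _, by simp⟩
  | mul x y hx hy ihx ihy =>
      obtain ⟨n, j, hn, rfl⟩ := ihx
      obtain ⟨n', j', hn', rfl⟩ := ihy
      exact ⟨n * (r₀ ^ j * n' * (r₀ ^ j)⁻¹), j + j',
        mulR hn (conjR hl₀ hn' (zpow_mem (Subgroup.subset_closure hr₀) j)), by group⟩
  | inv x hx ih =>
      obtain ⟨n, j, hn, rfl⟩ := ih
      exact ⟨(r₀ ^ j)⁻¹ * n⁻¹ * ((r₀ ^ j)⁻¹)⁻¹, -j,
        conjR hl₀ (invR hn) (inv_mem (zpow_mem (Subgroup.subset_closure hr₀) j)), by group⟩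

end Aux2

namespace Aux3
variable {G : Type*} [Group G] {L R : Set G} {l₀ r₀ : G}
open Aux Aux2

lemma transferLR (hl₀ : l₀ ∈ L) (hr₀ : r₀ ∈ R) {p q n : G} {a : ℤ}
    (hpq : (p, q) ∈ Hc L R) (hn : (n, (1:G)) ∈ Hc L R) (hp : p = n * l₀ ^ a) :
    ∃ n' : G, ((1:G), n') ∈ Hc L R ∧ q = n' * r₀ ^ a := by
  have h1 := mul_mem hpq (inv_mem (diag hl₀ hr₀ a))
  have e : ((p, q) * ((l₀ ^ a, r₀ ^ a) : G × G)⁻¹) = (p * (l₀ ^ a)⁻¹, q * (r₀ ^ a)⁻¹) := by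
    simp [Prod.ext_iff]
  rw [e] at h1
  have e2 : p * (l₀ ^ a)⁻¹ = n := by rw [hp]; group
  rw [e2] at h1
  have h3 := mul_mem (invL hn) h1
  have e3 : ((n⁻¹, (1:G)) * (n, q * (r₀ ^ a)⁻¹) : G × G) = ((1:G), q * (r₀ ^ a)⁻¹) := by
    simp [Prod.ext_iff]
  rw [e3] at h3
  exact ⟨q * (r₀ ^ a)⁻¹, h3, by group⟩

lemma transferRL (hl₀ : l₀ ∈ L) (hr₀ : r₀ ∈ R) {p q n : G} {a : ℤ}
    (hpq : (p, q) ∈ Hc L R) (hn : ((1:G), n) ∈ Hc L R) (hq : q = n * r₀ ^ a) :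
    ∃ n' : G, (n', (1:G)) ∈ Hc L R ∧ p = n' * l₀ ^ a := by
  have h1 := mul_mem hpq (inv_mem (diag hl₀ hr₀ a))
  have e : ((p, q) * ((l₀ ^ a, r₀ ^ a) : G × G)⁻¹) = (p * (l₀ ^ a)⁻¹, q * (r₀ ^ a)⁻¹) := by
    simp [Prod.ext_iff]
  rw [e] at h1
  have e2 : q * (r₀ ^ a)⁻¹ = n := by rw [hq]; group
  rw [e2] at h1
  have h3 := mul_mem h1 (invR hn)
  have e3 : ((p * (l₀ ^ a)⁻¹, n) * ((1:G), n⁻¹) : G × G) = (p * (l₀ ^ a)⁻¹, (1:G)) := by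
    simp [Prod.ext_iff]
  rw [e3] at h3
  exact ⟨p * (l₀ ^ a)⁻¹, h3, by group⟩

lemma coset_mulL (hl₀ : l₀ ∈ L) (hr₀ : r₀ ∈ R) {m n : G}
    (hm : (m, (1:G)) ∈ Hc L R) (hn : (n, (1:G)) ∈ Hc L R) (a b : ℤ) :
    ∃ p : G, (p, (1:G)) ∈ Hc L R ∧ (m * l₀ ^ a) * (n * l₀ ^ b) = p * l₀ ^ (a + b) :=
  ⟨m * (l₀ ^ a * n * (l₀ ^ a)⁻¹),
    mulL hm (conjL hr₀ hn (zpow_mem (Subgroup.subset_closure hl₀) a)), by group⟩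

lemma coset_invL (hl₀ : l₀ ∈ L) (hr₀ : r₀ ∈ R) {m : G}
    (hm : (m, (1:G)) ∈ Hc L R) (a : ℤ) :
    ∃ p : G, (p, (1:G)) ∈ Hc L R ∧ (m * l₀ ^ a)⁻¹ = p * l₀ ^ (-a) :=
  ⟨(l₀ ^ a)⁻¹ * m⁻¹ * ((l₀ ^ a)⁻¹)⁻¹,
    conjL hr₀ (invL hm) (inv_mem (zpow_mem (Subgroup.subset_closure hl₀) a)), by group⟩

lemma coset_mulR (hl₀ : l₀ ∈ L) (hr₀ : r₀ ∈ R) {m n : G}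
    (hm : ((1:G), m) ∈ Hc L R) (hn : ((1:G), n) ∈ Hc L R) (a b : ℤ) :
    ∃ p : G, ((1:G), p) ∈ Hc L R ∧ (m * r₀ ^ a) * (n * r₀ ^ b) = p * r₀ ^ (a + b) :=
  ⟨m * (r₀ ^ a * n * (r₀ ^ a)⁻¹),
    mulR hm (conjR hl₀ hn (zpow_mem (Subgroup.subset_closure hr₀) a)), by group⟩

lemma coset_invR (hl₀ : l₀ ∈ L) (hr₀ : r₀ ∈ R) {m : G}
    (hm : ((1:G), m) ∈ Hc L R) (a : ℤ) :
    ∃ p : G, ((1:G), p) ∈ Hc L R ∧ (m * r₀ ^ a)⁻¹ = p * r₀ ^ (-a) :=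
  ⟨(r₀ ^ a)⁻¹ * m⁻¹ * ((r₀ ^ a)⁻¹)⁻¹,
    conjR hl₀ (invR hm) (inv_mem (zpow_mem (Subgroup.subset_closure hr₀) a)), by group⟩

lemma zpowL (hl₀ : l₀ ∈ L) (hr₀ : r₀ ∈ R) {z n : G} {e : ℤ}
    (hn : (n, (1:G)) ∈ Hc L R) (hz : z = n * l₀ ^ e) :
    ∀ k : ℤ, ∃ m : G, (m, (1:G)) ∈ Hc L R ∧ z ^ k = m * l₀ ^ (e * k) := by
  intro k
  induction k using Int.induction_on with
  | zero => exact ⟨1, one_mem _, by simp⟩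
  | succ i ih =>
      obtain ⟨m, hm, hzk⟩ := ih
      obtain ⟨p, hp', heq⟩ := coset_mulL hl₀ hr₀ hm hn (e * i) e
      refine ⟨p, hp', ?_⟩
      rw [zpow_add_one, hzk, hz, heq]
      congr 1
      ring
  | pred i ih =>
      obtain ⟨m, hm, hzk⟩ := ih
      obtain ⟨p1, hp1, heq1⟩ := coset_invL hl₀ hr₀ hn e
      obtain ⟨p2, hp2, heq2⟩ := coset_mulL hl₀ hr₀ hm hp1 (e * (-i)) (-e)
      refine ⟨p2, hp2, ?_⟩
      rw [zpow_sub_one, hzk, hz, heq1, heq2]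
      congr 1
      ring

lemma zpowR (hl₀ : l₀ ∈ L) (hr₀ : r₀ ∈ R) {z n : G} {f : ℤ}
    (hn : ((1:G), n) ∈ Hc L R) (hz : z = n * r₀ ^ f) :
    ∀ k : ℤ, ∃ m : G, ((1:G), m) ∈ Hc L R ∧ z ^ k = m * r₀ ^ (f * k) := by
  intro k
  induction k using Int.induction_on with
  | zero => exact ⟨1, one_mem _, by simp⟩
  | succ i ih =>
      obtain ⟨m, hm, hzk⟩ := ih
      obtain ⟨p, hp', heq⟩ := coset_mulR hl₀ hr₀ hm hn (f * i) f
      refine ⟨p, hp', ?_⟩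
      rw [zpow_add_one, hzk, hz, heq]
      congr 1
      ring
  | pred i ih =>
      obtain ⟨m, hm, hzk⟩ := ih
      obtain ⟨p1, hp1, heq1⟩ := coset_invR hl₀ hr₀ hn f
      obtain ⟨p2, hp2, heq2⟩ := coset_mulR hl₀ hr₀ hm hp1 (f * (-i)) (-f)
      refine ⟨p2, hp2, ?_⟩
      rw [zpow_sub_one, hzk, hz, heq1, heq2]
      congr 1
      ring

lemma mem_of_form (hl₀ : l₀ ∈ L) (hr₀ : r₀ ∈ R) {n n' : G}
    (hn : (n, (1:G)) ∈ Hc L R) (hn' : ((1:G), n') ∈ Hc L R) (m : ℤ) :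
    ∃ p q : G, (p, q) ∈ Hc L R ∧ n * l₀ ^ (-m) * (n' * r₀ ^ m) = p⁻¹ * q := by
  refine ⟨l₀ ^ m * n⁻¹, n' * r₀ ^ m, ?_, by group⟩
  have h := mul_mem hn' (mul_mem (diag hl₀ hr₀ m) (invL hn))
  have e : (((1:G), n') * ((l₀ ^ m, r₀ ^ m) * (n⁻¹, (1:G))) : G × G)
      = (l₀ ^ m * n⁻¹, n' * r₀ ^ m) := by
    simp [Prod.ext_iff]
  rwa [e] at h

end Aux3

namespace Aux4
variable {G : Type*} [Group G] {L R : Set G} {l₀ r₀ : G}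
open Aux Aux2 Aux3

lemma main_back (hl₀ : l₀ ∈ L) (hr₀ : r₀ ∈ R) (z : G) (e f : ℤ)
    (hz1 : ∃ n : G, (n, (1:G)) ∈ Hc L R ∧ z = n * l₀ ^ e)
    (hz2 : ∃ n : G, ((1:G), n) ∈ Hc L R ∧ z = n * r₀ ^ f)
    (hef : e - f = 1 ∨ e - f = -1)
    {g n n' : G} {j k : ℤ}
    (hn : (n, (1:G)) ∈ Hc L R) (hn' : ((1:G), n') ∈ Hc L R)
    (hg : g = n * l₀ ^ j * (n' * r₀ ^ k)) :
    ∃ p q : G, (p, q) ∈ Hc L R ∧ g = p⁻¹ * q := by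
  obtain ⟨nz, hnz, hze⟩ := hz1
  obtain ⟨mz, hmz, hzf⟩ := hz2
  set k' : ℤ := -((e - f) * (j + k)) with hk'
  have hd : (e - f) * (e - f) = 1 := by rcases hef with h | h <;> rw [h] <;> ring
  obtain ⟨nα, hnα, hα⟩ := zpowL hl₀ hr₀ hnz hze k'
  obtain ⟨nβ, hnβ, hβ⟩ := zpowR hl₀ hr₀ hmz hzf k'
  have key : g = (n * l₀ ^ j * (nα * l₀ ^ (e * k'))) *
      ((nβ * r₀ ^ (f * k'))⁻¹ * (n' * r₀ ^ k)) := by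
    rw [hg, ← hα, ← hβ]; group
  obtain ⟨A, hA, eA⟩ := coset_mulL hl₀ hr₀ hn hnα j (e * k')
  obtain ⟨B, hB, eB⟩ := coset_invR hl₀ hr₀ hnβ (f * k')
  obtain ⟨C, hC, eC⟩ := coset_mulR hl₀ hr₀ hB hn' (-(f * k')) k
  have hm : j + e * k' = -(-(f * k') + k) := by
    have h2 : (e - f) * k' = -(j + k) := by
      rw [hk']
      calc (e - f) * -((e - f) * (j + k)) = -((e - f) * (e - f) * (j + k)) := by ring
        _ = -(j + k) := by rw [hd]; ring
    have h3 : e * k' - f * k' = -(j + k) := by rw [← h2]; ring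
    linarith
  have hg2 : g = A * l₀ ^ (-(-(f * k') + k)) * (C * r₀ ^ (-(f * k') + k)) := by
    have step1 : (n * l₀ ^ j) * (nα * l₀ ^ (e * k')) = A * l₀ ^ (j + e * k') := eA
    rw [key, step1, eB, eC, ← hm]
  obtain ⟨p, q, hpq, epq⟩ := mem_of_form hl₀ hr₀ hA hC (-(f * k') + k)
  exact ⟨p, q, hpq, by rw [hg2, epq]⟩

lemma xformL (hl₀ : l₀ ∈ L) (hr₀ : r₀ ∈ R) {x : G} (hx : x ∈ L ∪ L⁻¹) :
    ∃ nx : G, ∃ ε : ℤ, (nx, (1:G)) ∈ Hc L R ∧ x = nx * l₀ ^ ε ∧ (ε = 1 ∨ ε = -1) := by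
  rcases hx with hx | hx
  · exact ⟨x * l₀⁻¹, 1, fst_mul_inv (gen_mem hx hr₀) (gen_mem hl₀ hr₀), by group, Or.inl rfl⟩
  · have hx' : x⁻¹ ∈ L := Set.mem_inv.mp hx
    have h1 : (l₀⁻¹ * x⁻¹, (1:G)) ∈ Hc L R :=
      fst_inv_mul (gen_mem hl₀ hr₀) (gen_mem hx' hr₀)
    have h2 := invL h1
    have e : (l₀⁻¹ * x⁻¹)⁻¹ = x * l₀ := by group
    rw [e] at h2
    exact ⟨x * l₀, -1, h2, by group, Or.inr rfl⟩

lemma xformR (hl₀ : l₀ ∈ L) (hr₀ : r₀ ∈ R) {x : G} (hx : x ∈ R ∪ R⁻¹) :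
    ∃ nx : G, ∃ ε : ℤ, ((1:G), nx) ∈ Hc L R ∧ x = nx * r₀ ^ ε ∧ (ε = 1 ∨ ε = -1) := by
  rcases hx with hx | hx
  · exact ⟨x * r₀⁻¹, 1, snd_mul_inv (gen_mem hl₀ hx) (gen_mem hl₀ hr₀), by group, Or.inl rfl⟩
  · have hx' : x⁻¹ ∈ R := Set.mem_inv.mp hx
    have h1 : ((1:G), r₀⁻¹ * x⁻¹) ∈ Hc L R :=
      snd_inv_mul (gen_mem hl₀ hr₀) (gen_mem hl₀ hx')
    have h2 := invR h1
    have e : (r₀⁻¹ * x⁻¹)⁻¹ = x * r₀ := by group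
    rw [e] at h2
    exact ⟨x * r₀, -1, h2, by group, Or.inr rfl⟩

lemma extractL (hl₀ : l₀ ∈ L) (hr₀ : r₀ ∈ R) {x P S : G}
    (hx : x ∈ L ∪ L⁻¹) (hPS : (P, S) ∈ Hc L R) (hxval : x = P⁻¹ * S) :
    ∃ z : G, ∃ e f : ℤ,
      (∃ n : G, (n, (1:G)) ∈ Hc L R ∧ z = n * l₀ ^ e) ∧
      (∃ n : G, ((1:G), n) ∈ Hc L R ∧ z = n * r₀ ^ f) ∧
      (e - f = 1 ∨ e - f = -1) := by
  have hP := (memL hPS).1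
  obtain ⟨nx, ε, hnx, hxe, hε⟩ := xformL hl₀ hr₀ hx
  obtain ⟨nP, a, hnP, hPe⟩ := cosetL hl₀ hr₀ P hP
  obtain ⟨nS, hnS, hSe⟩ := transferLR hl₀ hr₀ hPS hnP hPe
  obtain ⟨N, hN, hNe⟩ := coset_mulL hl₀ hr₀ hnP hnx a ε
  refine ⟨S, a + ε, a, ⟨N, hN, ?_⟩, ⟨nS, hnS, hSe⟩, ?_⟩
  · have hSx : S = P * x := by rw [hxval]; group
    rw [hSx, hPe, hxe, hNe]
  · omega

lemma extractR (hl₀ : l₀ ∈ L) (hr₀ : r₀ ∈ R) {x P S : G}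
    (hx : x ∈ R ∪ R⁻¹) (hPS : (P, S) ∈ Hc L R) (hxval : x = P⁻¹ * S) :
    ∃ z : G, ∃ e f : ℤ,
      (∃ n : G, (n, (1:G)) ∈ Hc L R ∧ z = n * l₀ ^ e) ∧
      (∃ n : G, ((1:G), n) ∈ Hc L R ∧ z = n * r₀ ^ f) ∧
      (e - f = 1 ∨ e - f = -1) := by
  have hS := (memL hPS).2
  obtain ⟨nx, ε, hnx, hxe, hε⟩ := xformR hl₀ hr₀ hx
  obtain ⟨nS, b, hnS, hSe⟩ := cosetR hl₀ hr₀ S hS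
  obtain ⟨nP, hnP, hPe⟩ := transferRL hl₀ hr₀ hPS hnS hSe
  obtain ⟨B1, hB1, eB1⟩ := coset_invR hl₀ hr₀ hnx ε
  obtain ⟨M, hM, eM⟩ := coset_mulR hl₀ hr₀ hnS hB1 b (-ε)
  refine ⟨P, b, b + -ε, ⟨nP, hnP, hPe⟩, ⟨M, hM, ?_⟩, ?_⟩
  · have hPx : P = S * x⁻¹ := by rw [hxval]; group
    rw [hPx, hSe, hxe, eB1, eM]
  · omega

lemma extract (hl₀ : l₀ ∈ L) (hr₀ : r₀ ∈ R) {x P S : G}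
    (hx : x ∈ L ∪ L⁻¹ ∪ R ∪ R⁻¹) (hPS : (P, S) ∈ Hc L R) (hxval : x = P⁻¹ * S) :
    ∃ z : G, ∃ e f : ℤ,
      (∃ n : G, (n, (1:G)) ∈ Hc L R ∧ z = n * l₀ ^ e) ∧
      (∃ n : G, ((1:G), n) ∈ Hc L R ∧ z = n * r₀ ^ f) ∧
      (e - f = 1 ∨ e - f = -1) := by
  rcases hx with ((hx | hx) | hx) | hx
  · exact extractL hl₀ hr₀ (Or.inl hx) hPS hxval
  · exact extractL hl₀ hr₀ (Or.inr hx) hPS hxval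
  · exact extractR hl₀ hr₀ (Or.inl hx) hPS hxval
  · exact extractR hl₀ hr₀ (Or.inr hx) hPS hxval

end Aux4

namespace Aux5
variable {G : Type*} [Group G]

lemma wordset_subset_closure {S : Set G} :
    WordSet (S ∪ S⁻¹) ⊆ (Subgroup.closure S : Set G) := by
  rintro w ⟨n, hn, lst, hlen, hmem, rfl⟩
  refine Subgroup.list_prod_mem _ (fun y hy => ?_)
  rcases hmem y hy with h | h
  · exact Subgroup.subset_closure h
  · have h' : y⁻¹ ∈ S := Set.mem_inv.mp h
    simpa using inv_mem (Subgroup.subset_closure h')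

lemma closure_subset_wordset {S : Set G} {s₀ : G} (hs : s₀ ∈ S) :
    (Subgroup.closure S : Set G) ⊆ WordSet (S ∪ S⁻¹) := by
  intro w hw
  have hw' : w ∈ Subgroup.closure S := hw
  clear hw
  induction hw' using Subgroup.closure_induction with
  | mem x hx =>
      refine ⟨1, one_pos, [x], rfl, ?_, by simp⟩
      intro y hy
      simp only [List.mem_singleton] at hy
      subst hy
      exact Or.inl hx
  | one =>
      refine ⟨2, by norm_num, [s₀, s₀⁻¹], rfl, ?_, by simp⟩
      intro y hy
      simp only [List.mem_cons, List.mem_singleton] at hy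
      rcases hy with rfl | rfl | h
      · exact Or.inl hs
      · exact Or.inr (by simpa using hs)
      · exact absurd h (by simp)
  | mul x y hx hy ihx ihy =>
      obtain ⟨n1, hn1, l1, hl1, hm1, hp1⟩ := ihx
      obtain ⟨n2, hn2, l2, hl2, hm2, hp2⟩ := ihy
      refine ⟨n1 + n2, by omega, l1 ++ l2, by simp [hl1, hl2], ?_, by
        rw [List.prod_append, hp1, hp2]⟩
      intro a ha
      rcases List.mem_append.mp ha with h | h
      · exact hm1 a h
      · exact hm2 a h
  | inv x hx ih =>
      obtain ⟨n1, hn1, l1, hl1, hm1, hp1⟩ := ih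
      refine ⟨n1, hn1, (l1.map (fun t => t⁻¹)).reverse, by simp [hl1], ?_, ?_⟩
      · intro a ha
        simp only [List.mem_reverse, List.mem_map] at ha
        obtain ⟨b, hb, rfl⟩ := ha
        rcases hm1 b hb with h | h
        · exact Or.inr (by simpa using h)
        · exact Or.inl (by simpa using Set.mem_inv.mp h)
      · rw [← List.prod_inv_reverse, hp1]

end Aux5

theorem stmt_10 {G : Type*} [Group G] (L R : Set G) (hL : L.Nonempty) (hR : R.Nonempty) :
    (∀ g h : G, WeakConn L R g h) ↔
      (WordSet (L ∪ L⁻¹) * WordSet (R ∪ R⁻¹) = Set.univ ∧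
       ∃ x ∈ L ∪ L⁻¹ ∪ R ∪ R⁻¹, WeakConn L R x 1) := by
  obtain ⟨l₀, hl₀⟩ := hL
  obtain ⟨r₀, hr₀⟩ := hR
  constructor
  · intro hconn
    constructor
    · apply Set.eq_univ_of_forall
      intro g
      obtain ⟨p, q, hpq, hg⟩ := (Aux.weakConn_iff).mp (hconn 1 g)
      have hp := (Aux.memL hpq).1
      have hq := (Aux.memL hpq).2
      have hg' : g = p⁻¹ * q := by rw [hg]; group
      rw [hg']
      exact Set.mul_mem_mul (Aux5.closure_subset_wordset hl₀ (inv_mem hp))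
        (Aux5.closure_subset_wordset hr₀ hq)
    · exact ⟨l₀, Or.inl (Or.inl (Or.inl hl₀)), hconn l₀ 1⟩
  · rintro ⟨hcov, x, hx, hxconn⟩ g h
    have key : ∀ g : G, WeakConn L R 1 g := by
      intro g
      have hg : g ∈ WordSet (L ∪ L⁻¹) * WordSet (R ∪ R⁻¹) := by
        rw [hcov]; trivial
      obtain ⟨u, hu, v, hv, huv⟩ := hg
      have hu' : u ∈ Subgroup.closure L := Aux5.wordset_subset_closure hu
      have hv' : v ∈ Subgroup.closure R := Aux5.wordset_subset_closure hv
      obtain ⟨n, j, hn, hue⟩ := Aux2.cosetL hl₀ hr₀ u hu'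
      obtain ⟨n', k, hn', hve⟩ := Aux2.cosetR hl₀ hr₀ v hv'
      obtain ⟨P0, S0, hPS0, hx1⟩ := (Aux.weakConn_iff).mp hxconn
      have hPS : (P0⁻¹, S0⁻¹) ∈ Aux.Hc L R := by
        have h := inv_mem hPS0
        have e : ((P0, S0) : G × G)⁻¹ = (P0⁻¹, S0⁻¹) := rfl
        rwa [e] at h
      have hxval : x = (P0⁻¹)⁻¹ * S0⁻¹ := by
        calc x = P0 * (P0⁻¹ * x * S0) * S0⁻¹ := by group
          _ = P0 * 1 * S0⁻¹ := by rw [← hx1]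
          _ = (P0⁻¹)⁻¹ * S0⁻¹ := by group
      obtain ⟨z, e, f, hz1, hz2, hef⟩ := Aux4.extract hl₀ hr₀ hx hPS hxval
      have hgdec : g = n * l₀ ^ j * (n' * r₀ ^ k) := by rw [← huv, hue, hve]
      obtain ⟨p, q, hpq, hgval⟩ := Aux4.main_back hl₀ hr₀ z e f hz1 hz2 hef hn hn' hgdec
      have hstep : WeakConn L R 1 (p⁻¹ * 1 * q) := Aux.step_all hpq 1
      have e2 : p⁻¹ * (1:G) * q = g := by rw [hgval]; group
      rwa [e2] at hstep
    exact (Aux.weakConn_symm (key g)).trans (key h)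
end

section
/- Suppose W(L) and W(R) are subgroups of G. Then 2S(G;L,R) is strongly connected if and only if G = ⟨L⟩⟨R⟩ and there exist i, j ∈ ℕ with |i − j| = 1 such that e = u·v where u is a word in L⁻¹ of length i and v is a word in R of length j. -/
open Relation Pointwise

namespace Stmt11

variable {G : Type*} [Group G]

lemma isWord_one (S : Set G) : IsWord S 0 1 := ⟨[], rfl, by simp, rfl⟩

lemma isWord_congr {S : Set G} {m n : ℕ} {w : G} (h : IsWord S m w) (e : m = n) :
    IsWord S n w := e ▸ h

lemma isWord_mem {S : Set G} {x : G} (hx : x ∈ S) : IsWord S 1 x :=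
  ⟨[x], rfl, by simpa using hx, by simp⟩

lemma isWord_mul {S : Set G} {m n : ℕ} {u v : G} (hu : IsWord S m u) (hv : IsWord S n v) :
    IsWord S (m + n) (u * v) := by
  obtain ⟨l₁, h₁, hm₁, hp₁⟩ := hu
  obtain ⟨l₂, h₂, hm₂, hp₂⟩ := hv
  refine ⟨l₁ ++ l₂, by simp [h₁, h₂], ?_, by simp [hp₁, hp₂]⟩
  intro x hx
  rcases List.mem_append.1 hx with h | h
  · exact hm₁ x h
  · exact hm₂ x h

lemma isWord_inv {S : Set G} {n : ℕ} {w : G} (h : IsWord S n w) : IsWord S⁻¹ n w⁻¹ := by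
  obtain ⟨l, hl, hm, hp⟩ := h
  refine ⟨(l.map (·⁻¹)).reverse, by simp [hl], ?_, ?_⟩
  · intro x hx
    simp only [List.mem_reverse, List.mem_map] at hx
    obtain ⟨y, hy, rfl⟩ := hx
    simpa using hm y hy
  · rw [← hp]
    exact (List.prod_inv_reverse l).symm

lemma isWord_pow {S : Set G} {m : ℕ} {w : G} (h : IsWord S m w) (α : ℕ) :
    IsWord S (α * m) (w ^ α) := by
  induction α with
  | zero => simpa using isWord_one S
  | succ k ih =>
      rw [pow_succ]
      exact isWord_congr (isWord_mul ih h) (by ring)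

lemma isWord_mem_closure {S : Set G} {n : ℕ} {w : G} (h : IsWord S n w) :
    w ∈ Subgroup.closure S := by
  obtain ⟨l, _, hm, rfl⟩ := h
  exact list_prod_mem fun x hx => Subgroup.subset_closure (hm x hx)

lemma wordSet_eq_closure {S : Set G} (h : ∃ H : Subgroup G, WordSet S = ↑H) :
    WordSet S = ↑(Subgroup.closure S) := by
  obtain ⟨H, hH⟩ := h
  apply le_antisymm
  · rintro w ⟨n, _, hw⟩
    exact isWord_mem_closure hw
  · have hSH : S ⊆ ↑H := fun x hx => hH ▸ ⟨1, one_pos, isWord_mem hx⟩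
    have hle : Subgroup.closure S ≤ H := (Subgroup.closure_le H).2 hSH
    intro x hx
    rw [hH]
    exact hle hx

lemma exists_word_of_mem {S : Set G} (hS : WordSet S = ↑(Subgroup.closure S)) {x : G}
    (hx : x ∈ Subgroup.closure S) : ∃ n, 0 < n ∧ IsWord S n x := by
  have : x ∈ WordSet S := by rw [hS]; exact hx
  exact this

lemma exists_invword_of_mem {S : Set G} (hS : WordSet S = ↑(Subgroup.closure S)) {x : G}
    (hx : x ∈ Subgroup.closure S) : ∃ n, 0 < n ∧ IsWord S⁻¹ n x := by
  obtain ⟨n, hn, hw⟩ := exists_word_of_mem hS (inv_mem hx)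
  exact ⟨n, hn, by simpa using isWord_inv hw⟩

lemma dpath_word {L R : Set G} {g h : G} (hp : DPath L R g h) :
    ∃ n u v, IsWord L⁻¹ n u ∧ IsWord R n v ∧ h = u * g * v := by
  induction hp with
  | refl => exact ⟨0, 1, 1, isWord_one _, isWord_one _, by simp⟩
  | tail _ harc ih =>
      obtain ⟨n, u, v, hu, hv, he⟩ := ih
      obtain ⟨l, hl, r, hr, rfl⟩ := harc
      have hli : l⁻¹ ∈ L⁻¹ := by simpa using hl
      refine ⟨n + 1, l⁻¹ * u, v * r, ?_, isWord_mul hv (isWord_mem hr), ?_⟩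
      · exact isWord_congr (isWord_mul (isWord_mem hli) hu) (by ring)
      · rw [he]; group

lemma word_dpath {L R : Set G} :
    ∀ (lv lu : List G), lu.length = lv.length → (∀ x ∈ lu, x ∈ L⁻¹) → (∀ x ∈ lv, x ∈ R) →
      ∀ g : G, DPath L R g (lu.prod * g * lv.prod) := by
  intro lv
  induction lv with
  | nil =>
      intro lu hlen _ _ g
      have : lu = [] := List.length_eq_zero_iff.mp (by simpa using hlen)
      simp [this]; exact ReflTransGen.refl
  | cons b lv' ih =>
      intro lu hlen hLu hRv g
      have hne : lu ≠ [] := by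
        intro e; rw [e] at hlen; simp at hlen
      set a := lu.getLast hne with ha_def
      have hsplit : lu.dropLast ++ [a] = lu := List.dropLast_append_getLast hne
      have ha : a ∈ L⁻¹ := hLu a (List.getLast_mem hne)
      have hb : b ∈ R := hRv b (by simp)
      have step : Arc L R g (a * g * b) :=
        ⟨a⁻¹, Set.mem_inv.1 ha, b, hb, by simp⟩
      have hlen' : lu.dropLast.length = lv'.length := by
        have := (List.length_dropLast : lu.dropLast.length = lu.length - 1)
        simp only [List.length_cons] at hlen
        omega
      have tailpath : DPath L R (a * g * b) (lu.dropLast.prod * (a * g * b) * lv'.prod) :=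
        ih lu.dropLast hlen' (fun x hx => hLu x (List.dropLast_subset lu hx)) 
          (fun x hx => hRv x (List.mem_cons_of_mem _ hx)) (a * g * b)
      have hpath : DPath L R g (lu.dropLast.prod * (a * g * b) * lv'.prod) :=
        ReflTransGen.head step tailpath
      have heq : lu.dropLast.prod * (a * g * b) * lv'.prod = lu.prod * g * (b :: lv').prod := by
        rw [← hsplit]
        simp [List.prod_append, mul_assoc]
      rwa [heq] at hpath

lemma dpath_of_words {L R : Set G} {n : ℕ} {u v : G} (hu : IsWord L⁻¹ n u) (hv : IsWord R n v)
    (g : G) : DPath L R g (u * g * v) := by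
  obtain ⟨lu, hlu, hmu, rfl⟩ := hu
  obtain ⟨lv, hlv, hmv, rfl⟩ := hv
  exact word_dpath lv lu (by rw [hlu, hlv]) hmu hmv g

lemma arith {i j mL mR : ℕ} (hij : i = j + 1 ∨ j = i + 1) (hmL : 0 < mL) (hmR : 0 < mR)
    (p q : ℕ) : ∃ α β γ : ℕ, p + (α * i + β * mL) = q + (α * j + γ * mR) := by
  obtain ⟨mL', rfl⟩ : ∃ m', mL = m' + 1 := ⟨mL - 1, by omega⟩
  obtain ⟨mR', rfl⟩ : ∃ m', mR = m' + 1 := ⟨mR - 1, by omega⟩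
  rcases hij with rfl | rfl
  · rcases le_or_gt p q with hpq | hpq
    · refine ⟨q - p, 0, 0, ?_⟩
      have h1 : (q - p) * (j + 1) = (q - p) * j + (q - p) := by ring
      omega
    · refine ⟨(p - q) * mR', 0, p - q, ?_⟩
      have h1 : (p - q) * mR' * (j + 1) = (p - q) * mR' * j + (p - q) * mR' := by ring
      have h2 : (p - q) * (mR' + 1) = (p - q) * mR' + (p - q) := by ring
      omega
  · rcases le_or_gt q p with hpq | hpq
    · refine ⟨p - q, 0, 0, ?_⟩
      have h1 : (p - q) * (i + 1) = (p - q) * i + (p - q) := by ring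
      omega
    · refine ⟨(q - p) * mL', q - p, 0, ?_⟩
      have h1 : (q - p) * mL' * (i + 1) = (q - p) * mL' * i + (q - p) * mL' := by ring
      have h2 : (q - p) * (mL' + 1) = (q - p) * mL' + (q - p) := by ring
      omega

end Stmt11

theorem stmt_11 {G : Type*} [Group G] (L R : Set G) (hL : L.Nonempty) (hR : R.Nonempty)
    (hWL : ∃ H : Subgroup G, WordSet L = (H : Set G))
    (hWR : ∃ H : Subgroup G, WordSet R = (H : Set G)) :
    (∀ g h : G, DPath L R g h) ↔
      ((Subgroup.closure L : Set G) * (Subgroup.closure R : Set G) = Set.univ ∧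
       ∃ i j : ℕ, (i = j + 1 ∨ j = i + 1) ∧
         ∃ u v : G, IsWord L⁻¹ i u ∧ IsWord R j v ∧ u * v = 1) := by
  have hCL := Stmt11.wordSet_eq_closure hWL
  have hCR := Stmt11.wordSet_eq_closure hWR
  constructor
  · intro hconn
    constructor
    · apply Set.eq_univ_of_forall
      intro g
      obtain ⟨n, u, v, hu, hv, he⟩ := Stmt11.dpath_word (hconn 1 g)
      rw [Set.mem_mul]
      refine ⟨u, ?_, v, Stmt11.isWord_mem_closure hv, ?_⟩
      · have := Stmt11.isWord_mem_closure hu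
        rwa [Subgroup.closure_inv] at this
      · rw [he]; group
    · obtain ⟨r₀, hr₀⟩ := hR
      obtain ⟨n, u, v, hu, hv, he⟩ := Stmt11.dpath_word (hconn r₀ 1)
      refine ⟨n, n + 1, Or.inr rfl, u, r₀ * v,
        hu, Stmt11.isWord_congr (Stmt11.isWord_mul (Stmt11.isWord_mem hr₀) hv) (by ring), ?_⟩
      rw [← mul_assoc]
      exact he.symm
  · rintro ⟨hUniv, i, j, hij, u₀, v₀, hu₀, hv₀, huv₀⟩
    have hdecomp : ∀ g : G, ∃ x ∈ Subgroup.closure L, ∃ y ∈ Subgroup.closure R, x * y = g := by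
      intro g
      have : g ∈ (Subgroup.closure L : Set G) * (Subgroup.closure R : Set G) := by
        rw [hUniv]; trivial
      simpa [Set.mem_mul] using this
    obtain ⟨mL, hmLpos, hmL⟩ := Stmt11.exists_word_of_mem hCL (one_mem _)
    obtain ⟨mR, hmRpos, hmR⟩ := Stmt11.exists_word_of_mem hCR (one_mem _)
    have hmL' : IsWord L⁻¹ mL 1 := by simpa using Stmt11.isWord_inv hmL
    have hv₀inv : v₀ = u₀⁻¹ := eq_inv_of_mul_eq_one_right huv₀
    have key1 : ∀ h : G, DPath L R 1 h := by
      intro h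
      obtain ⟨x, hx, y, hy, hxy⟩ := hdecomp h
      obtain ⟨p, _, hxw⟩ := Stmt11.exists_invword_of_mem hCL hx
      obtain ⟨q, _, hyw⟩ := Stmt11.exists_word_of_mem hCR hy
      obtain ⟨α, β, γ, habc⟩ := Stmt11.arith hij hmLpos hmRpos p q
      have hU : IsWord L⁻¹ (p + (α * i + β * mL)) (x * (u₀ ^ α * 1 ^ β)) :=
        Stmt11.isWord_mul hxw
          (Stmt11.isWord_mul (Stmt11.isWord_pow hu₀ α) (Stmt11.isWord_pow hmL' β))
      have hV : IsWord R (p + (α * i + β * mL)) (1 ^ γ * (v₀ ^ α * y)) :=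
        Stmt11.isWord_congr
          (Stmt11.isWord_mul (Stmt11.isWord_pow hmR γ)
            (Stmt11.isWord_mul (Stmt11.isWord_pow hv₀ α) hyw)) (by omega)
      have hpath := Stmt11.dpath_of_words hU hV 1
      have heq : x * (u₀ ^ α * 1 ^ β) * 1 * (1 ^ γ * (v₀ ^ α * y)) = h := by
        rw [hv₀inv, ← hxy]
        simp [one_pow, mul_assoc, inv_pow]
      rwa [heq] at hpath
    have key2 : ∀ g : G, DPath L R g 1 := by
      intro g
      obtain ⟨x, hx, y, hy, hxy⟩ := hdecomp g
      obtain ⟨p, _, hxw⟩ := Stmt11.exists_word_of_mem hCL hx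
      obtain ⟨q, _, hyw⟩ := Stmt11.exists_invword_of_mem hCR hy
      obtain ⟨α, β, γ, habc⟩ := Stmt11.arith hij hmLpos hmRpos p q
      have hs₀ : IsWord L i u₀⁻¹ := by simpa using Stmt11.isWord_inv hu₀
      have ht₀ : IsWord R⁻¹ j v₀⁻¹ := Stmt11.isWord_inv hv₀
      have hmR' : IsWord R⁻¹ mR 1 := by simpa using Stmt11.isWord_inv hmR
      have hS : IsWord L (p + (α * i + β * mL)) (x * (u₀⁻¹ ^ α * 1 ^ β)) :=
        Stmt11.isWord_mul hxw
          (Stmt11.isWord_mul (Stmt11.isWord_pow hs₀ α) (Stmt11.isWord_pow hmL β))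
      have hT : IsWord R⁻¹ (p + (α * i + β * mL)) (1 ^ γ * (v₀⁻¹ ^ α * y)) :=
        Stmt11.isWord_congr
          (Stmt11.isWord_mul (Stmt11.isWord_pow hmR' γ)
            (Stmt11.isWord_mul (Stmt11.isWord_pow ht₀ α) hyw)) (by omega)
      have hU := Stmt11.isWord_inv hS
      have hV : IsWord R (p + (α * i + β * mL)) (1 ^ γ * (v₀⁻¹ ^ α * y))⁻¹ := by
        simpa using Stmt11.isWord_inv hT
      have hpath := Stmt11.dpath_of_words hU hV g
      have heq : (x * (u₀⁻¹ ^ α * 1 ^ β))⁻¹ * g * (1 ^ γ * (v₀⁻¹ ^ α * y))⁻¹ = 1 := by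
        rw [← hxy, hv₀inv]
        group
      rwa [heq] at hpath
    intro g h
    exact Relation.ReflTransGen.trans (key2 g) (key1 h)
end
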